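/- arXiv:1212.1389 — 7 statements merged into one kernel-verified Lean document; each statement's English description precedes it below -/
import Mathlib

section
/- Dodgson condensation (Desnanot–Jacobi identity): For an n×n matrix A over a commutative ring with n ≥ 2, and indices i ≠ j, let A(a;b) denote A with row a and column b removed, and A(i,j;i,j) denote A with rows i,j and columns i,j removed. Then det A(i;i) · det A(j;j) − det A(i;j) · det A(j;i) = det A · det A(i,j;i,j). -/
open Matrix

private lemma dodgson_aux {R : Type*} [CommRing R] {n : ℕ}
    (A : Matrix (Fin (n + 2)) (Fin (n + 2)) R) (i j : Fin (n + 2)) (hij : i ≠ j)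
    (e : Fin n → Fin (n + 2)) (hinj : Function.Injective e)
    (hei : ∀ x, e x ≠ i) (hej : ∀ x, e x ≠ j)
    [Invertible A] [Invertible (A.submatrix e e)] :
    A.adjugate i i * A.adjugate j j - A.adjugate j i * A.adjugate i j
      = A.det * (A.submatrix e e).det := by
  classical
  set t : Fin 2 → Fin (n + 2) := ![i, j] with ht
  have hti : t 0 = i := rfl
  have htj : t 1 = j := rfl
  have htinj : Function.Injective t := by
    intro a b hab
    fin_cases a <;> fin_cases b <;> simp_all [t]
  have hbij : Function.Bijective (Sum.elim e t) := by
    rw [Fintype.bijective_iff_injective_and_card]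
    constructor
    · rintro (a | a) (b | b) h
      · exact congrArg _ (hinj h)
      · exfalso; fin_cases b
        · exact hei a h
        · exact hej a h
      · exfalso; fin_cases a
        · exact hei b h.symm
        · exact hej b h.symm
      · exact congrArg _ (htinj h)
    · simp
  let σ : (Fin n ⊕ Fin 2) ≃ Fin (n + 2) := Equiv.ofBijective _ hbij
  set B := A.submatrix e e with hB
  set C := A.submatrix e t with hC
  set D := A.submatrix t e with hD
  set E := A.submatrix t t with hE
  have hS : A.submatrix σ σ = fromBlocks B C D E := by
    ext (a | a) (b | b) <;> rfl
  letI iS : Invertible (fromBlocks B C D E) :=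
    (submatrixEquivInvertible A σ σ).copy _ hS.symm
  letI iSchur : Invertible (E - D * ⅟B * C) := invertibleOfFromBlocks₁₁Invertible B C D E
  have hAinv : ⅟(fromBlocks B C D E) = (⅟A).submatrix σ σ := by
    apply invOf_eq_right_inv
    rw [← hS, submatrix_mul_equiv, mul_invOf_self, submatrix_one_equiv]
  have hblock := invOf_fromBlocks₁₁_eq B C D E
  have h22 : ∀ a b, (⅟(E - D * ⅟B * C)) a b = (⅟A) (t a) (t b) := by
    intro a b
    have h := congrFun (congrFun (hblock.symm.trans hAinv) (Sum.inr a)) (Sum.inr b)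
    simpa [fromBlocks, σ] using h
  have hdet : A.det = B.det * (E - D * ⅟B * C).det := by
    rw [← det_submatrix_equiv_self σ A, hS, det_fromBlocks₁₁]
  have hone : (E - D * ⅟B * C).det * (⅟(E - D * ⅟B * C)).det = 1 := by
    rw [← det_mul, mul_invOf_self, det_one]
  have hadj : A.adjugate = A.det • ⅟A := by
    calc A.adjugate = ⅟A * A * A.adjugate := by rw [invOf_mul_self, Matrix.one_mul]
    _ = ⅟A * (A * A.adjugate) := by rw [Matrix.mul_assoc]
    _ = ⅟A * (A.det • 1) := by rw [Matrix.mul_adjugate]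
    _ = A.det • ⅟A := by rw [Matrix.mul_smul, Matrix.mul_one]
  have hinvdet : (⅟(E - D * ⅟B * C)).det = ⅟A i i * ⅟A j j - ⅟A i j * ⅟A j i := by
    rw [det_fin_two, h22, h22, h22, h22, hti, htj]
  have hkey : A.det * A.det * (⅟A i i * ⅟A j j - ⅟A i j * ⅟A j i) = A.det * B.det := by
    rw [← hinvdet, hdet]
    linear_combination B.det ^ 2 * (E - D * ⅟B * C).det * hone
  rw [hadj]
  simp only [Matrix.smul_apply, smul_eq_mul]
  linear_combination hkey

private lemma dodgson_map {R S : Type*} [CommRing R] [CommRing S] (f : R →+* S) {n : ℕ}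
    (M : Matrix (Fin (n + 2)) (Fin (n + 2)) R) (i j : Fin (n + 2)) (e : Fin n → Fin (n + 2)) :
    f (M.adjugate i i * M.adjugate j j - M.adjugate j i * M.adjugate i j
        - M.det * (M.submatrix e e).det)
    = (M.map f).adjugate i i * (M.map f).adjugate j j
        - (M.map f).adjugate j i * (M.map f).adjugate i j
        - (M.map f).det * ((M.map f).submatrix e e).det := by
  have hadj : ∀ a b, f (M.adjugate a b) = (M.map f).adjugate a b := by
    intro a b
    have h := congrFun (congrFun (f.map_adjugate M) a) b
    simpa [RingHom.mapMatrix_apply] using h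
  have hdet : f M.det = (M.map f).det := by
    have h := f.map_det M
    simpa [RingHom.mapMatrix_apply] using h
  have hdet2 : f (M.submatrix e e).det = ((M.map f).submatrix e e).det := by
    have h := f.map_det (M.submatrix e e)
    simpa [RingHom.mapMatrix_apply, submatrix_map] using h
  simp [map_sub, _root_.map_mul, hadj, hdet, hdet2]

private lemma dodgson_adj {R : Type*} [CommRing R] {n : ℕ}
    (A : Matrix (Fin (n + 2)) (Fin (n + 2)) R) (i j : Fin (n + 2)) (hij : i ≠ j)
    (e : Fin n → Fin (n + 2)) (hinj : Function.Injective e)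
    (hei : ∀ x, e x ≠ i) (hej : ∀ x, e x ≠ j) :
    A.adjugate i i * A.adjugate j j - A.adjugate j i * A.adjugate i j
      = A.det * (A.submatrix e e).det := by
  classical
  let P := MvPolynomial (Fin (n + 2) × Fin (n + 2)) ℤ
  let F := FractionRing P
  let X : Matrix (Fin (n + 2)) (Fin (n + 2)) P := mvPolynomialX (Fin (n + 2)) (Fin (n + 2)) ℤ
  let φ : P →+* F := algebraMap P F
  have hφ : Function.Injective φ := IsFractionRing.injective P F
  -- the generic determinants are nonzero
  have hdX : X.det ≠ 0 := det_mvPolynomialX_ne_zero _ ℤ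
  have hdXe : (X.submatrix e e).det ≠ 0 := by
    have hg : Function.Injective fun p : Fin n × Fin n => (e p.1, e p.2) := by
      intro p q h
      exact Prod.ext (hinj (congrArg Prod.fst h)) (hinj (congrArg Prod.snd h))
    set ρ : MvPolynomial (Fin n × Fin n) ℤ →+* P :=
      (MvPolynomial.rename fun p : Fin n × Fin n => (e p.1, e p.2)).toRingHom with hρ
    have hρinj : Function.Injective ρ := MvPolynomial.rename_injective _ hg
    have hXe : X.submatrix e e = (mvPolynomialX (Fin n) (Fin n) ℤ).map ρ := by
      ext a b
      simp [X, ρ, mvPolynomialX, MvPolynomial.rename_X]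
    rw [hXe]
    have h := ρ.map_det (mvPolynomialX (Fin n) (Fin n) ℤ)
    rw [RingHom.mapMatrix_apply] at h
    rw [← h]
    intro h0
    exact det_mvPolynomialX_ne_zero (Fin n) ℤ (hρinj (h0.trans ρ.map_zero.symm))
  -- invertibility of the generic matrix over the fraction field
  have hYdet : (X.map φ).det = φ X.det := by
    have h := φ.map_det X
    simpa [RingHom.mapMatrix_apply] using h.symm
  have hYedet : ((X.map φ).submatrix e e).det = φ (X.submatrix e e).det := by
    have h := φ.map_det (X.submatrix e e)
    simpa [RingHom.mapMatrix_apply, submatrix_map] using h.symm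
  letI : Invertible (X.map φ) := by
    apply invertibleOfIsUnitDet
    rw [hYdet, isUnit_iff_ne_zero]
    exact fun h0 => hdX (hφ (h0.trans φ.map_zero.symm))
  letI : Invertible ((X.map φ).submatrix e e) := by
    apply invertibleOfIsUnitDet
    rw [hYedet, isUnit_iff_ne_zero]
    exact fun h0 => hdXe (hφ (h0.trans φ.map_zero.symm))
  -- identity for the generic matrix over the fraction field
  have hF := dodgson_aux (X.map φ) i j hij e hinj hei hej
  -- pull back to the polynomial ring
  have hX : X.adjugate i i * X.adjugate j j - X.adjugate j i * X.adjugate i j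
      = X.det * (X.submatrix e e).det := by
    rw [← sub_eq_zero]
    apply hφ
    rw [dodgson_map φ X i j e, φ.map_zero, sub_eq_zero]
    exact hF
  -- push forward to `R`
  let ψ : P →+* R := MvPolynomial.eval₂Hom (Int.castRingHom R) fun p => A p.1 p.2
  have hXA : X.map ψ = A := mvPolynomialX_map_eval₂ _ A
  rw [← sub_eq_zero]
  have h := congrArg ψ (sub_eq_zero.mpr hX)
  rw [dodgson_map ψ X i j e, ψ.map_zero, hXA] at h
  exact h

/-- **Dodgson condensation (Desnanot–Jacobi identity).**
For an `(n+2) × (n+2)` matrix `A` over a commutative ring and distinct indices `i ≠ j`,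
writing `A.submatrix a.succAbove b.succAbove` for `A` with row `a` and column `b` removed,
and `A.submatrix e e` (where `e : Fin n → Fin (n+2)` is the strictly monotone map avoiding
`i` and `j`) for `A` with rows `i, j` and columns `i, j` removed, we have
`det A(i;i) ⬝ det A(j;j) − det A(i;j) ⬝ det A(j;i) = det A ⬝ det A(i,j;i,j)`. -/
theorem dodgson_condensation {R : Type*} [CommRing R] {n : ℕ}
    (A : Matrix (Fin (n + 2)) (Fin (n + 2)) R) (i j : Fin (n + 2)) (hij : i ≠ j)
    (e : Fin n → Fin (n + 2)) (he : StrictMono e)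
    (hei : ∀ x, e x ≠ i) (hej : ∀ x, e x ≠ j) :
    (A.submatrix i.succAbove i.succAbove).det * (A.submatrix j.succAbove j.succAbove).det
      - (A.submatrix i.succAbove j.succAbove).det * (A.submatrix j.succAbove i.succAbove).det
      = A.det * (A.submatrix e e).det := by
  have key := dodgson_adj A i j hij e he.injective hei hej
  have E1 : A.adjugate i i = (A.submatrix i.succAbove i.succAbove).det := by
    rw [adjugate_fin_succ_eq_det_submatrix, Even.neg_one_pow ⟨(i : ℕ), rfl⟩, one_mul]
  have E2 : A.adjugate j j = (A.submatrix j.succAbove j.succAbove).det := by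
    rw [adjugate_fin_succ_eq_det_submatrix, Even.neg_one_pow ⟨(j : ℕ), rfl⟩, one_mul]
  have E3 : A.adjugate j i * A.adjugate i j
      = (A.submatrix i.succAbove j.succAbove).det * (A.submatrix j.succAbove i.succAbove).det := by
    rw [adjugate_fin_succ_eq_det_submatrix, adjugate_fin_succ_eq_det_submatrix]
    have hs : ((-1 : R) ^ ((i : ℕ) + (j : ℕ))) * ((-1 : R) ^ ((j : ℕ) + (i : ℕ))) = 1 := by
      rw [← pow_add]
      exact Even.neg_one_pow ⟨(i : ℕ) + (j : ℕ), by ring⟩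
    calc ((-1 : R) ^ ((i : ℕ) + (j : ℕ)) * (A.submatrix i.succAbove j.succAbove).det)
          * ((-1 : R) ^ ((j : ℕ) + (i : ℕ)) * (A.submatrix j.succAbove i.succAbove).det)
        = ((-1 : R) ^ ((i : ℕ) + (j : ℕ)) * (-1 : R) ^ ((j : ℕ) + (i : ℕ)))
            * ((A.submatrix i.succAbove j.succAbove).det
              * (A.submatrix j.succAbove i.succAbove).det) := by ring
      _ = _ := by rw [hs, one_mul]
  rw [← E1, ← E2, ← E3]
  exact key
end

section
/- Let f(x,y) be (k−1)-times differentiable in each of x and y. Then applying both Vandermonde determinants of differential operators Δ(d/dx) and Δ(d/dy) to ∏_{i=1}^k f(x_i, y_i) and evaluating at x₁ = ⋯ = x_k = X, y₁ = ⋯ = y_k = Y gives k! · det_{k×k}( ∂^{i+j−2} f / ∂X^{i−1} ∂Y^{j−1} (X,Y) ). -/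
open scoped Nat

/-- Partial derivative in the `i`-th coordinate of the first block of variables. -/
noncomputable def partialDx {k : ℕ} (i : Fin k)
    (F : (Fin k → ℝ) × (Fin k → ℝ) → ℝ) : (Fin k → ℝ) × (Fin k → ℝ) → ℝ :=
  fun z => deriv (fun t => F (Function.update z.1 i t, z.2)) (z.1 i)

/-- Partial derivative in the `i`-th coordinate of the second block of variables. -/
noncomputable def partialDy {k : ℕ} (i : Fin k)
    (F : (Fin k → ℝ) × (Fin k → ℝ) → ℝ) : (Fin k → ℝ) × (Fin k → ℝ) → ℝ :=
  fun z => deriv (fun t => F (z.1, Function.update z.2 i t)) (z.2 i)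

/-- The list of pairs `(i, j)` with `1 ≤ i < j ≤ k`. -/
def pairList (k : ℕ) : List (Fin k × Fin k) :=
  (List.finRange k).flatMap fun i =>
    ((List.finRange k).filter fun j => i < j).map fun j => (i, j)

/-- `Δ(d/dx) = ∏_{1≤i<j≤k}(∂/∂xᵢ − ∂/∂xⱼ)` acting in the first block of variables. -/
noncomputable def vandermondeDx {k : ℕ} :
    ((Fin k → ℝ) × (Fin k → ℝ) → ℝ) → ((Fin k → ℝ) × (Fin k → ℝ) → ℝ) :=
  ((pairList k).map fun p F => partialDx p.1 F - partialDx p.2 F).foldr (· ∘ ·) id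

/-- `Δ(d/dy) = ∏_{1≤i<j≤k}(∂/∂yᵢ − ∂/∂yⱼ)` acting in the second block of variables. -/
noncomputable def vandermondeDy {k : ℕ} :
    ((Fin k → ℝ) × (Fin k → ℝ) → ℝ) → ((Fin k → ℝ) × (Fin k → ℝ) → ℝ) :=
  ((pairList k).map fun p F => partialDy p.1 F - partialDy p.2 F).foldr (· ∘ ·) id

namespace VDX

/-! ### One-variable partial derivatives on `ℝ × ℝ` -/

noncomputable def pdx (F : ℝ × ℝ → ℝ) : ℝ × ℝ → ℝ := fun p => fderiv ℝ F p (1, 0)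
noncomputable def pdy (F : ℝ × ℝ → ℝ) : ℝ × ℝ → ℝ := fun p => fderiv ℝ F p (0, 1)

lemma contDiff_pdx {n : ℕ} {F : ℝ × ℝ → ℝ} (h : ContDiff ℝ ((n + 1 : ℕ) : ℕ∞) F) :
    ContDiff ℝ (n : ℕ∞) (pdx F) :=
  (h.fderiv_right (by push_cast; exact le_rfl)).clm_apply contDiff_const

lemma contDiff_pdy {n : ℕ} {F : ℝ × ℝ → ℝ} (h : ContDiff ℝ ((n + 1 : ℕ) : ℕ∞) F) :
    ContDiff ℝ (n : ℕ∞) (pdy F) :=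
  (h.fderiv_right (by push_cast; exact le_rfl)).clm_apply contDiff_const

lemma contDiff_pdx_iter {a n : ℕ} {F : ℝ × ℝ → ℝ} (h : ContDiff ℝ ((a + n : ℕ) : ℕ∞) F) :
    ContDiff ℝ (n : ℕ∞) (pdx^[a] F) := by
  induction a generalizing F with
  | zero => simpa using h
  | succ a ih =>
      rw [Function.iterate_succ_apply]
      exact ih (contDiff_pdx (by rw [show a + n + 1 = a + 1 + n by omega]; exact h))

lemma contDiff_pdy_iter {a n : ℕ} {F : ℝ × ℝ → ℝ} (h : ContDiff ℝ ((a + n : ℕ) : ℕ∞) F) :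
    ContDiff ℝ (n : ℕ∞) (pdy^[a] F) := by
  induction a generalizing F with
  | zero => simpa using h
  | succ a ih =>
      rw [Function.iterate_succ_apply]
      exact ih (contDiff_pdy (by rw [show a + n + 1 = a + 1 + n by omega]; exact h))

lemma hasDerivAt_slice_x {F : ℝ × ℝ → ℝ} {x y : ℝ} (h : DifferentiableAt ℝ F (x, y)) :
    HasDerivAt (fun t => F (t, y)) (pdx F (x, y)) x := by
  have hline : HasDerivAt (fun t : ℝ => (t, y)) ((1 : ℝ), (0 : ℝ)) x :=
    (hasDerivAt_id x).prodMk (hasDerivAt_const x y)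
  exact h.hasFDerivAt.comp_hasDerivAt x hline

lemma hasDerivAt_slice_y {F : ℝ × ℝ → ℝ} {x y : ℝ} (h : DifferentiableAt ℝ F (x, y)) :
    HasDerivAt (fun t => F (x, t)) (pdy F (x, y)) y := by
  have hline : HasDerivAt (fun t : ℝ => (x, t)) ((0 : ℝ), (1 : ℝ)) y :=
    (hasDerivAt_const y x).prodMk (hasDerivAt_id y)
  exact h.hasFDerivAt.comp_hasDerivAt y hline

lemma contDiff_of_le {m n : ℕ} {F : ℝ × ℝ → ℝ} (h : ContDiff ℝ ((n : ℕ) : ℕ∞) F)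
    (hmn : m ≤ n) : ContDiff ℝ ((m : ℕ) : ℕ∞) F :=
  h.of_le (by exact_mod_cast hmn)

/-! ### Clairaut: the two partial derivative operators commute -/

lemma pdx_pdy_swap {F : ℝ × ℝ → ℝ} (h : ContDiff ℝ ((2 : ℕ) : ℕ∞) F) :
    pdx (pdy F) = pdy (pdx F) := by
  funext p
  have hsymm : IsSymmSndFDerivAt ℝ F p := by
    apply ContDiffAt.isSymmSndFDerivAt h.contDiffAt
    simp
  have hdf : ∀ q : ℝ × ℝ, DifferentiableAt ℝ (fderiv ℝ F) q := fun q =>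
    ((h.fderiv_right (m := 1) (by norm_num)).differentiable (by norm_num)) q
  have e1 : pdx (pdy F) p = fderiv ℝ (fderiv ℝ F) p (1, 0) (0, 1) := by
    have : pdy F = fun q => (fderiv ℝ F q) (0, 1) := rfl
    rw [pdx, this]
    rw [fderiv_clm_apply (hdf p) (differentiableAt_const _)]
    simp
  have e2 : pdy (pdx F) p = fderiv ℝ (fderiv ℝ F) p (0, 1) (1, 0) := by
    have : pdx F = fun q => (fderiv ℝ F q) (1, 0) := rfl
    rw [pdy, this]
    rw [fderiv_clm_apply (hdf p) (differentiableAt_const _)]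
    simp
  rw [e1, e2, hsymm.eq]

lemma pdy_pdx_iter_swap {a : ℕ} {F : ℝ × ℝ → ℝ} (h : ContDiff ℝ ((a + 1 : ℕ) : ℕ∞) F) :
    pdy (pdx^[a] F) = pdx^[a] (pdy F) := by
  induction a generalizing F with
  | zero => simp
  | succ a ih =>
      rw [Function.iterate_succ_apply, Function.iterate_succ_apply]
      have h2 : ContDiff ℝ ((2 : ℕ) : ℕ∞) F := contDiff_of_le h (by omega)
      have hpdxF : ContDiff ℝ ((a + 1 : ℕ) : ℕ∞) (pdx F) := by
        have := contDiff_pdx_iter (a := 1) (n := a + 1) (F := F)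
          (by rw [show 1 + (a + 1) = a + 1 + 1 by omega]; exact h)
        simpa using this
      rw [ih hpdxF, ← pdx_pdy_swap h2]

lemma pdy_iter_pdx_iter_swap {a b : ℕ} {F : ℝ × ℝ → ℝ}
    (h : ContDiff ℝ ((a + b : ℕ) : ℕ∞) F) :
    pdy^[b] (pdx^[a] F) = pdx^[a] (pdy^[b] F) := by
  induction b generalizing F with
  | zero => simp
  | succ b ih =>
      have hpdyF : ContDiff ℝ ((a + b : ℕ) : ℕ∞) (pdy F) := by
        have := contDiff_pdy_iter (a := 1) (n := a + b) (F := F)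
          (by rw [show 1 + (a + b) = a + (b + 1) by omega]; exact h)
        simpa using this
      rw [Function.iterate_succ_apply, pdy_pdx_iter_swap (contDiff_of_le h (by omega)),
        ih hpdyF, Function.iterate_succ_apply]

/-! ### Relating slice `iteratedDeriv` with the `pdx`/`pdy` iterates -/

lemma iteratedDeriv_slice_x {n : ℕ} {F : ℝ × ℝ → ℝ} (hF : ContDiff ℝ ((n : ℕ) : ℕ∞) F)
    {a : ℕ} (ha : a ≤ n) (y : ℝ) :
    iteratedDeriv a (fun x' => F (x', y)) = fun x => pdx^[a] F (x, y) := by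
  induction a with
  | zero => simp [iteratedDeriv_zero]
  | succ a ih =>
      funext x
      rw [iteratedDeriv_succ, ih (by omega)]
      have hd : DifferentiableAt ℝ (pdx^[a] F) (x, y) := by
        have : ContDiff ℝ ((1 : ℕ) : ℕ∞) (pdx^[a] F) :=
          contDiff_pdx_iter (contDiff_of_le hF (by omega))
        exact (this.differentiable (by simp)) (x, y)
      rw [(hasDerivAt_slice_x hd).deriv, Function.iterate_succ_apply']

lemma iteratedDeriv_slice_y {n : ℕ} {F : ℝ × ℝ → ℝ} (hF : ContDiff ℝ ((n : ℕ) : ℕ∞) F)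
    {b : ℕ} (hb : b ≤ n) (x : ℝ) :
    iteratedDeriv b (fun y' => F (x, y')) = fun y => pdy^[b] F (x, y) := by
  induction b with
  | zero => simp [iteratedDeriv_zero]
  | succ b ih =>
      funext y
      rw [iteratedDeriv_succ, ih (by omega)]
      have hd : DifferentiableAt ℝ (pdy^[b] F) (x, y) := by
        have : ContDiff ℝ ((1 : ℕ) : ℕ∞) (pdy^[b] F) :=
          contDiff_pdy_iter (contDiff_of_le hF (by omega))
        exact (this.differentiable (by simp)) (x, y)
      rw [(hasDerivAt_slice_y hd).deriv, Function.iterate_succ_apply']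

/-- The matrix entry in the theorem equals the canonical mixed partial. -/
lemma matrix_entry_eq {n : ℕ} {f : ℝ → ℝ → ℝ}
    (hf : ContDiff ℝ ((n : ℕ) : ℕ∞) (Function.uncurry f)) {i j : ℕ}
    (hij : i + j ≤ n) (X Y : ℝ) :
    iteratedDeriv j (fun y => iteratedDeriv i (fun x => f x y) X) Y
      = pdx^[i] (pdy^[j] (Function.uncurry f)) (X, Y) := by
  have h1 : (fun y => iteratedDeriv i (fun x => f x y) X)
      = fun y => pdx^[i] (Function.uncurry f) (X, y) := by
    funext y
    have := congrFun (iteratedDeriv_slice_x hf (a := i) (by omega) y) X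
    simpa [Function.uncurry] using this
  rw [h1]
  have h2 : ContDiff ℝ ((j : ℕ) : ℕ∞) (pdx^[i] (Function.uncurry f)) :=
    contDiff_pdx_iter (contDiff_of_le hf (by omega))
  have := congrFun (iteratedDeriv_slice_y h2 (b := j) le_rfl X) Y
  rw [this, pdy_iter_pdx_iter_swap (contDiff_of_le hf hij)]

/-! ### The mixed partials `Gd` and the umbral evaluation `Ev` -/

noncomputable def Gd (f : ℝ → ℝ → ℝ) (a b : ℕ) : ℝ × ℝ → ℝ :=
  pdx^[a] (pdy^[b] (Function.uncurry f))

lemma contDiff_Gd {f : ℝ → ℝ → ℝ} {N a b n : ℕ}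
    (hf : ContDiff ℝ ((N : ℕ) : ℕ∞) (Function.uncurry f))
    (h : a + b + n ≤ N) : ContDiff ℝ ((n : ℕ) : ℕ∞) (Gd f a b) := by
  refine contDiff_pdx_iter (contDiff_pdy_iter ?_)
  exact contDiff_of_le hf (by omega)

lemma hasDerivAt_Gd_x {f : ℝ → ℝ → ℝ} {N a b : ℕ}
    (hf : ContDiff ℝ ((N : ℕ) : ℕ∞) (Function.uncurry f)) (h : a + b < N) (x y : ℝ) :
    HasDerivAt (fun t => Gd f a b (t, y)) (Gd f (a + 1) b (x, y)) x := by
  have hd : DifferentiableAt ℝ (Gd f a b) (x, y) :=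
    ((contDiff_Gd hf (n := 1) (by omega)).differentiable (by simp)) (x, y)
  have := hasDerivAt_slice_x hd
  rwa [show Gd f (a + 1) b = pdx (Gd f a b) from Function.iterate_succ_apply' _ _ _]

lemma hasDerivAt_Gd_y {f : ℝ → ℝ → ℝ} {N b : ℕ}
    (hf : ContDiff ℝ ((N : ℕ) : ℕ∞) (Function.uncurry f)) (h : b < N) (x y : ℝ) :
    HasDerivAt (fun t => Gd f 0 b (x, t)) (Gd f 0 (b + 1) (x, y)) y := by
  have hd : DifferentiableAt ℝ (Gd f 0 b) (x, y) :=
    ((contDiff_Gd hf (n := 1) (by omega)).differentiable (by simp)) (x, y)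
  have := hasDerivAt_slice_y hd
  rwa [show Gd f 0 (b + 1) = pdy (Gd f 0 b) by
    simp only [Gd, Function.iterate_zero_apply]
    exact Function.iterate_succ_apply' _ _ _]

/-- The "umbral" basis function attached to a monomial exponent. -/
noncomputable def bF {k : ℕ} (f : ℝ → ℝ → ℝ) (m : (Fin k ⊕ Fin k) →₀ ℕ)
    (z : (Fin k → ℝ) × (Fin k → ℝ)) : ℝ :=
  ∏ i, Gd f (m (Sum.inl i)) (m (Sum.inr i)) (z.1 i, z.2 i)

/-- Linear evaluation of a polynomial in the "umbral" basis. -/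
noncomputable def Ev {k : ℕ} (f : ℝ → ℝ → ℝ) (P : MvPolynomial (Fin k ⊕ Fin k) ℝ)
    (z : (Fin k → ℝ) × (Fin k → ℝ)) : ℝ :=
  ∑ m ∈ P.support, P.coeff m * bF f m z

lemma Ev_add {k : ℕ} (f : ℝ → ℝ → ℝ) (P Q : MvPolynomial (Fin k ⊕ Fin k) ℝ) :
    Ev f (P + Q) = Ev f P + Ev f Q := by
  funext z
  show Ev f (P + Q) z = Ev f P z + Ev f Q z
  unfold Ev
  classical
  rw [Finset.sum_subset (MvPolynomial.support_add (p := P) (q := Q))]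
  · rw [Finset.sum_congr rfl (fun m _ => by rw [MvPolynomial.coeff_add, add_mul]),
      Finset.sum_add_distrib]
    congr 1
    · exact (Finset.sum_subset Finset.subset_union_left (fun m _ hm => by
        rw [MvPolynomial.notMem_support_iff.1 hm, zero_mul])).symm
    · exact (Finset.sum_subset Finset.subset_union_right (fun m _ hm => by
        rw [MvPolynomial.notMem_support_iff.1 hm, zero_mul])).symm
  · intro m _ hm
    rw [MvPolynomial.notMem_support_iff.1 hm, zero_mul]

lemma Ev_neg {k : ℕ} (f : ℝ → ℝ → ℝ) (P : MvPolynomial (Fin k ⊕ Fin k) ℝ) :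
    Ev f (-P) = -Ev f P := by
  funext z
  show Ev f (-P) z = -Ev f P z
  unfold Ev
  rw [MvPolynomial.support_neg, ← Finset.sum_neg_distrib]
  exact Finset.sum_congr rfl fun m _ => by rw [MvPolynomial.coeff_neg, neg_mul]

lemma Ev_sub {k : ℕ} (f : ℝ → ℝ → ℝ) (P Q : MvPolynomial (Fin k ⊕ Fin k) ℝ) :
    Ev f (P - Q) = Ev f P - Ev f Q := by
  rw [sub_eq_add_neg, Ev_add, Ev_neg, sub_eq_add_neg]

lemma Ev_zero {k : ℕ} (f : ℝ → ℝ → ℝ) (z : (Fin k → ℝ) × (Fin k → ℝ)) :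
    Ev f 0 z = 0 := by
  unfold Ev
  rw [MvPolynomial.support_zero]
  simp

lemma Ev_sum {k : ℕ} {ι : Type*} (f : ℝ → ℝ → ℝ) (s : Finset ι)
    (P : ι → MvPolynomial (Fin k ⊕ Fin k) ℝ) (z : (Fin k → ℝ) × (Fin k → ℝ)) :
    Ev f (∑ i ∈ s, P i) z = ∑ i ∈ s, Ev f (P i) z := by
  classical
  induction s using Finset.induction_on with
  | empty => simpa using Ev_zero f z
  | insert _ _ h ih =>
      rw [Finset.sum_insert h, Finset.sum_insert h, Ev_add]
      simp only [Pi.add_apply]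
      rw [ih]

lemma Ev_monomial {k : ℕ} (f : ℝ → ℝ → ℝ) (m : (Fin k ⊕ Fin k) →₀ ℕ) (c : ℝ)
    (z : (Fin k → ℝ) × (Fin k → ℝ)) :
    Ev f (MvPolynomial.monomial m c) z = c * bF f m z := by
  classical
  unfold Ev
  rw [MvPolynomial.support_monomial]
  by_cases hc : c = 0
  · simp [hc]
  · rw [if_neg hc, Finset.sum_singleton, MvPolynomial.coeff_monomial, if_pos rfl]

lemma Ev_X_mul {k : ℕ} (f : ℝ → ℝ → ℝ) (v : Fin k ⊕ Fin k)
    (P : MvPolynomial (Fin k ⊕ Fin k) ℝ) (z : (Fin k → ℝ) × (Fin k → ℝ)) :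
    Ev f (MvPolynomial.X v * P) z
      = ∑ m ∈ P.support, P.coeff m * bF f (Finsupp.single v 1 + m) z := by
  unfold Ev
  rw [MvPolynomial.support_X_mul, Finset.sum_map]
  exact Finset.sum_congr rfl fun m _ => by
    rw [addLeftEmbedding_apply, MvPolynomial.coeff_X_mul]

/-! ### Action of the partial derivative operators on `Ev` -/

lemma hasDerivAt_bF_x {k : ℕ} {f : ℝ → ℝ → ℝ} {N : ℕ}
    (hf : ContDiff ℝ ((N : ℕ) : ℕ∞) (Function.uncurry f)) (j : Fin k)
    (m : (Fin k ⊕ Fin k) →₀ ℕ) (hm : m (Sum.inl j) + m (Sum.inr j) < N)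
    (z : (Fin k → ℝ) × (Fin k → ℝ)) :
    HasDerivAt (fun t => bF f m (Function.update z.1 j t, z.2))
      (bF f (Finsupp.single (Sum.inl j) 1 + m) z) (z.1 j) := by
  classical
  set C : ℝ := ∏ i ∈ Finset.univ.erase j,
    Gd f (m (Sum.inl i)) (m (Sum.inr i)) (z.1 i, z.2 i) with hC
  have hfun : (fun t => bF f m (Function.update z.1 j t, z.2))
      = fun t => Gd f (m (Sum.inl j)) (m (Sum.inr j)) (t, z.2 j) * C := by
    funext t
    rw [bF, ← Finset.mul_prod_erase Finset.univ _ (Finset.mem_univ j)]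
    congr 1
    · simp
    · exact Finset.prod_congr rfl fun i hi => by
        simp [Function.update_of_ne (Finset.ne_of_mem_erase hi)]
  have hval : bF f (Finsupp.single (Sum.inl j) 1 + m) z
      = Gd f (m (Sum.inl j) + 1) (m (Sum.inr j)) (z.1 j, z.2 j) * C := by
    rw [bF, ← Finset.mul_prod_erase Finset.univ _ (Finset.mem_univ j)]
    congr 1
    · simp [Finsupp.single_apply, add_comm]
    · exact Finset.prod_congr rfl fun i hi => by
        have hij : i ≠ j := Finset.ne_of_mem_erase hi
        simp [Finsupp.single_apply, (Ne.symm hij)]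
  rw [hfun, hval]
  exact (hasDerivAt_Gd_x hf hm (z.1 j) (z.2 j)).mul_const C

lemma hasDerivAt_bF_y {k : ℕ} {f : ℝ → ℝ → ℝ} {N : ℕ}
    (hf : ContDiff ℝ ((N : ℕ) : ℕ∞) (Function.uncurry f)) (j : Fin k)
    (m : (Fin k ⊕ Fin k) →₀ ℕ) (hm0 : m (Sum.inl j) = 0) (hm : m (Sum.inr j) < N)
    (z : (Fin k → ℝ) × (Fin k → ℝ)) :
    HasDerivAt (fun t => bF f m (z.1, Function.update z.2 j t))
      (bF f (Finsupp.single (Sum.inr j) 1 + m) z) (z.2 j) := by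
  classical
  set C : ℝ := ∏ i ∈ Finset.univ.erase j,
    Gd f (m (Sum.inl i)) (m (Sum.inr i)) (z.1 i, z.2 i) with hC
  have hfun : (fun t => bF f m (z.1, Function.update z.2 j t))
      = fun t => Gd f 0 (m (Sum.inr j)) (z.1 j, t) * C := by
    funext t
    rw [bF, ← Finset.mul_prod_erase Finset.univ _ (Finset.mem_univ j)]
    congr 1
    · rw [hm0]; simp
    · exact Finset.prod_congr rfl fun i hi => by
        simp [Function.update_of_ne (Finset.ne_of_mem_erase hi)]
  have hval : bF f (Finsupp.single (Sum.inr j) 1 + m) z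
      = Gd f 0 (m (Sum.inr j) + 1) (z.1 j, z.2 j) * C := by
    rw [bF, ← Finset.mul_prod_erase Finset.univ _ (Finset.mem_univ j)]
    congr 1
    · simp [Finsupp.single_apply, add_comm, hm0]
    · exact Finset.prod_congr rfl fun i hi => by
        have hij : i ≠ j := Finset.ne_of_mem_erase hi
        simp [Finsupp.single_apply, (Ne.symm hij)]
  rw [hfun, hval]
  exact (hasDerivAt_Gd_y hf hm (z.1 j) (z.2 j)).mul_const C

lemma partialDx_Ev {k : ℕ} {f : ℝ → ℝ → ℝ} {N : ℕ}
    (hf : ContDiff ℝ ((N : ℕ) : ℕ∞) (Function.uncurry f)) (j : Fin k)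
    (P : MvPolynomial (Fin k ⊕ Fin k) ℝ)
    (hP : ∀ m ∈ P.support, m (Sum.inl j) + m (Sum.inr j) < N) :
    partialDx j (Ev f P) = Ev f (MvPolynomial.X (Sum.inl j) * P) := by
  funext z
  have hsum : HasDerivAt (fun t => Ev f P (Function.update z.1 j t, z.2))
      (∑ m ∈ P.support, P.coeff m * bF f (Finsupp.single (Sum.inl j) 1 + m) z) (z.1 j) := by
    unfold Ev
    exact HasDerivAt.fun_sum fun m hm => (hasDerivAt_bF_x hf j m (hP m hm) z).const_mul _
  rw [partialDx, hsum.deriv, Ev_X_mul]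

lemma partialDy_Ev {k : ℕ} {f : ℝ → ℝ → ℝ} {N : ℕ}
    (hf : ContDiff ℝ ((N : ℕ) : ℕ∞) (Function.uncurry f)) (j : Fin k)
    (P : MvPolynomial (Fin k ⊕ Fin k) ℝ)
    (hP : ∀ m ∈ P.support, m (Sum.inl j) = 0 ∧ m (Sum.inr j) < N) :
    partialDy j (Ev f P) = Ev f (MvPolynomial.X (Sum.inr j) * P) := by
  funext z
  have hsum : HasDerivAt (fun t => Ev f P (z.1, Function.update z.2 j t))
      (∑ m ∈ P.support, P.coeff m * bF f (Finsupp.single (Sum.inr j) 1 + m) z) (z.2 j) := by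
    unfold Ev
    exact HasDerivAt.fun_sum fun m hm =>
      (hasDerivAt_bF_y hf j m (hP m hm).1 (hP m hm).2 z).const_mul _
  rw [partialDy, hsum.deriv, Ev_X_mul]

/-! ### Folding over lists of pairs -/

def cnt {k : ℕ} (L : List (Fin k × Fin k)) (i : Fin k) : ℕ :=
  L.countP fun p => decide (p.1 = i ∨ p.2 = i)

lemma cnt_cons {k : ℕ} (p : Fin k × Fin k) (L : List (Fin k × Fin k)) (i : Fin k) :
    cnt (p :: L) i = cnt L i + if p.1 = i ∨ p.2 = i then 1 else 0 := by
  simp [cnt, List.countP_cons]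

noncomputable def VXp {k : ℕ} (L : List (Fin k × Fin k)) : MvPolynomial (Fin k ⊕ Fin k) ℝ :=
  (L.map fun p => MvPolynomial.X (Sum.inl p.1) - MvPolynomial.X (Sum.inl p.2)).prod
noncomputable def VYp {k : ℕ} (L : List (Fin k × Fin k)) : MvPolynomial (Fin k ⊕ Fin k) ℝ :=
  (L.map fun p => MvPolynomial.X (Sum.inr p.1) - MvPolynomial.X (Sum.inr p.2)).prod

noncomputable def opsX {k : ℕ} (L : List (Fin k × Fin k)) :
    (((Fin k → ℝ) × (Fin k → ℝ) → ℝ)) → (((Fin k → ℝ) × (Fin k → ℝ) → ℝ)) :=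
  (L.map fun p F => partialDx p.1 F - partialDx p.2 F).foldr (· ∘ ·) id
noncomputable def opsY {k : ℕ} (L : List (Fin k × Fin k)) :
    (((Fin k → ℝ) × (Fin k → ℝ) → ℝ)) → (((Fin k → ℝ) × (Fin k → ℝ) → ℝ)) :=
  (L.map fun p F => partialDy p.1 F - partialDy p.2 F).foldr (· ∘ ·) id

lemma support_sub_X {k : ℕ} (a b : Fin k ⊕ Fin k) (m : (Fin k ⊕ Fin k) →₀ ℕ)
    (hm : m ∈ (MvPolynomial.X a - MvPolynomial.X b : MvPolynomial (Fin k ⊕ Fin k) ℝ).support) :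
    m = Finsupp.single a 1 ∨ m = Finsupp.single b 1 := by
  classical
  have h1 := MvPolynomial.support_sub (Fin k ⊕ Fin k)
    (MvPolynomial.X a) (MvPolynomial.X b) hm
  rw [MvPolynomial.support_X, MvPolynomial.support_X] at h1
  simpa using h1

lemma VXp_support {k : ℕ} (L : List (Fin k × Fin k)) (m : (Fin k ⊕ Fin k) →₀ ℕ)
    (hm : m ∈ (VXp (k := k) L).support) :
    (∀ i, m (Sum.inl i) ≤ cnt L i) ∧ (∀ i, m (Sum.inr i) = 0) := by
  classical
  induction L generalizing m with
  | nil =>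
      simp only [VXp, List.map_nil, List.prod_nil] at hm
      rw [MvPolynomial.mem_support_iff, MvPolynomial.coeff_one] at hm
      have h0 : (0 : (Fin k ⊕ Fin k) →₀ ℕ) = m := by
        by_contra h; simp [h] at hm
      subst h0; simp
  | cons p L ih =>
      rw [VXp, List.map_cons, List.prod_cons] at hm
      have := MvPolynomial.support_mul _ _ hm
      rw [Finset.mem_add] at this
      obtain ⟨m1, h1, m2, h2, rfl⟩ := this
      have hb := ih m2 h2
      have h1' := support_sub_X _ _ _ h1
      constructor
      · intro i
        rw [cnt_cons]
        have : m1 (Sum.inl i) ≤ if p.1 = i ∨ p.2 = i then 1 else 0 := by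
          rcases h1' with rfl | rfl <;>
            · simp only [Finsupp.single_apply]
              split_ifs with h1'' h2'' <;> simp_all [Sum.inl.injEq]
        simp only [Finsupp.add_apply]
        have := hb.1 i
        omega
      · intro i
        simp only [Finsupp.add_apply, hb.2 i]
        rcases h1' with rfl | rfl <;> simp [Finsupp.single_apply]

lemma VYp_support {k : ℕ} (L : List (Fin k × Fin k)) (m : (Fin k ⊕ Fin k) →₀ ℕ)
    (hm : m ∈ (VYp (k := k) L).support) :
    (∀ i, m (Sum.inr i) ≤ cnt L i) ∧ (∀ i, m (Sum.inl i) = 0) := by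
  classical
  induction L generalizing m with
  | nil =>
      simp only [VYp, List.map_nil, List.prod_nil] at hm
      rw [MvPolynomial.mem_support_iff, MvPolynomial.coeff_one] at hm
      have h0 : (0 : (Fin k ⊕ Fin k) →₀ ℕ) = m := by
        by_contra h; simp [h] at hm
      subst h0; simp
  | cons p L ih =>
      rw [VYp, List.map_cons, List.prod_cons] at hm
      have := MvPolynomial.support_mul _ _ hm
      rw [Finset.mem_add] at this
      obtain ⟨m1, h1, m2, h2, rfl⟩ := this
      have hb := ih m2 h2
      have h1' := support_sub_X _ _ _ h1
      constructor
      · intro i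
        rw [cnt_cons]
        have : m1 (Sum.inr i) ≤ if p.1 = i ∨ p.2 = i then 1 else 0 := by
          rcases h1' with rfl | rfl <;>
            · simp only [Finsupp.single_apply]
              split_ifs with h1'' h2'' <;> simp_all [Sum.inr.injEq]
        simp only [Finsupp.add_apply]
        have := hb.1 i
        omega
      · intro i
        simp only [Finsupp.add_apply, hb.2 i]
        rcases h1' with rfl | rfl <;> simp [Finsupp.single_apply]

lemma opsX_Ev {k : ℕ} {f : ℝ → ℝ → ℝ} {N : ℕ}
    (hf : ContDiff ℝ ((N : ℕ) : ℕ∞) (Function.uncurry f))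
    (L : List (Fin k × Fin k)) (P : MvPolynomial (Fin k ⊕ Fin k) ℝ)
    (hP : ∀ m ∈ P.support, ∀ i, m (Sum.inl i) + m (Sum.inr i) + cnt L i ≤ N) :
    opsX L (Ev f P) = Ev f (VXp L * P) := by
  classical
  induction L generalizing P with
  | nil => simp [opsX, VXp]
  | cons p L ih =>
      have step : opsX (p :: L) (Ev f P)
          = partialDx p.1 (opsX L (Ev f P)) - partialDx p.2 (opsX L (Ev f P)) := rfl
      rw [step, ih P (fun m hm i => by
        have := hP m hm i
        rw [cnt_cons] at this
        split_ifs at this <;> omega)]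
      set Q := VXp L * P with hQ
      have hQsupp : ∀ (j : Fin k), (p.1 = j ∨ p.2 = j) →
          ∀ m ∈ Q.support, m (Sum.inl j) + m (Sum.inr j) < N := by
        intro j hj m hm
        have := MvPolynomial.support_mul _ _ hm
        rw [Finset.mem_add] at this
        obtain ⟨m1, h1, m2, h2, rfl⟩ := this
        have hb1 := VXp_support L m1 h1
        have hb2 := hP m2 h2 j
        rw [cnt_cons, if_pos hj] at hb2
        have e1 := hb1.1 j
        have e2 := hb1.2 j
        simp only [Finsupp.add_apply]
        omega
      rw [partialDx_Ev hf p.1 Q (hQsupp p.1 (Or.inl rfl)),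
        partialDx_Ev hf p.2 Q (hQsupp p.2 (Or.inr rfl)), ← Ev_sub, ← sub_mul]
      congr 1
      rw [VXp, List.map_cons, List.prod_cons, mul_assoc]
      rfl

lemma opsY_Ev {k : ℕ} {f : ℝ → ℝ → ℝ} {N : ℕ}
    (hf : ContDiff ℝ ((N : ℕ) : ℕ∞) (Function.uncurry f))
    (L : List (Fin k × Fin k)) (P : MvPolynomial (Fin k ⊕ Fin k) ℝ)
    (hP : ∀ m ∈ P.support, ∀ i, m (Sum.inl i) = 0 ∧ m (Sum.inr i) + cnt L i ≤ N) :
    opsY L (Ev f P) = Ev f (VYp L * P) := by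
  classical
  induction L generalizing P with
  | nil => simp [opsY, VYp]
  | cons p L ih =>
      have step : opsY (p :: L) (Ev f P)
          = partialDy p.1 (opsY L (Ev f P)) - partialDy p.2 (opsY L (Ev f P)) := rfl
      rw [step, ih P (fun m hm i => by
        have := hP m hm i
        rw [cnt_cons] at this
        split_ifs at this <;> exact ⟨this.1, by omega⟩)]
      set Q := VYp L * P with hQ
      have hQsupp : ∀ (j : Fin k), (p.1 = j ∨ p.2 = j) →
          ∀ m ∈ Q.support, m (Sum.inl j) = 0 ∧ m (Sum.inr j) < N := by
        intro j hj m hm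
        have := MvPolynomial.support_mul _ _ hm
        rw [Finset.mem_add] at this
        obtain ⟨m1, h1, m2, h2, rfl⟩ := this
        have hb1 := VYp_support L m1 h1
        have hb2 := hP m2 h2 j
        rw [cnt_cons, if_pos hj] at hb2
        have e1 := hb1.1 j
        have e2 := hb1.2 j
        simp only [Finsupp.add_apply]
        omega
      rw [partialDy_Ev hf p.1 Q (hQsupp p.1 (Or.inl rfl)),
        partialDy_Ev hf p.2 Q (hQsupp p.2 (Or.inr rfl)), ← Ev_sub, ← sub_mul]
      congr 1
      rw [VYp, List.map_cons, List.prod_cons, mul_assoc]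
      rfl

/-! ### Combinatorics of `pairList` -/

lemma cnt_pairList_le {k : ℕ} (i : Fin k) : cnt (pairList k) i ≤ k - 1 := by
  classical
  have hcnt : cnt (pairList k) i
      = ((List.finRange k).map fun a =>
          cnt (((List.finRange k).filter fun j => a < j).map
            fun j => ((a, j) : Fin k × Fin k)) i).sum := by
    rw [cnt, pairList, List.countP_flatMap]
    rfl
  rw [hcnt]
  have hinner : ∀ a : Fin k,
      cnt (((List.finRange k).filter fun j => a < j).map fun j => ((a, j) : Fin k × Fin k)) i
        ≤ if a = i then k - 1 - (i : ℕ) else if a < i then 1 else 0 := by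
    intro a
    rw [cnt, List.countP_map]
    by_cases hai : a = i
    · subst hai
      rw [if_pos rfl]
      calc List.countP _ _ ≤ ((List.finRange k).filter fun j => a < j).length :=
            List.countP_le_length
        _ = ((List.finRange k).filter fun j => a < j).toFinset.card :=
            (List.toFinset_card_of_nodup ((List.nodup_finRange k).filter _)).symm
        _ = (Finset.Ioi a).card := by
            rw [List.toFinset_filter, List.toFinset_finRange]
            congr 1
            ext x; simp
        _ = k - 1 - (a : ℕ) := Fin.card_Ioi a
    · rw [if_neg hai]
      by_cases hlt : a < i
      · rw [if_pos hlt]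
        have : ((fun p : Fin k × Fin k => decide (p.1 = i ∨ p.2 = i)) ∘ fun j => (a, j))
            = fun j => j == i := by
          funext j
          simp only [Function.comp_apply]
          by_cases hj : j = i <;> simp [hj, hai]
        rw [this]
        exact List.nodup_iff_count_le_one.1 ((List.nodup_finRange k).filter _) i
      · rw [if_neg hlt]
        rw [Nat.le_zero, List.countP_eq_zero]
        intro j hj
        have hj2 := List.of_mem_filter hj
        have haj : a < j := by simpa using hj2
        simp only [Function.comp_apply]
        have hji : ¬ (j = i) := by
          intro h; subst h
          exact (hlt haj).elim
        simp [hai, hji]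
  calc _ ≤ ((List.finRange k).map fun a =>
        if a = i then k - 1 - (i : ℕ) else if a < i then 1 else 0).sum :=
        List.sum_le_sum fun a _ => hinner a
    _ = ∑ a : Fin k, (if a = i then k - 1 - (i : ℕ) else if a < i then 1 else 0) :=
        (Fin.sum_univ_def _).symm
    _ ≤ k - 1 := by
        classical
        rw [← Finset.add_sum_erase Finset.univ _ (Finset.mem_univ i), if_pos rfl]
        have h2 : ∑ a ∈ Finset.univ.erase i,
            (if a = i then k - 1 - (i : ℕ) else if a < i then 1 else 0)
            ≤ (i : ℕ) := by
          calc ∑ a ∈ Finset.univ.erase i,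
              (if a = i then k - 1 - (i : ℕ) else if a < i then 1 else 0)
              = ∑ a ∈ Finset.univ.erase i, (if a < i then 1 else 0) :=
                Finset.sum_congr rfl fun a ha => by
                  rw [if_neg (Finset.ne_of_mem_erase ha)]
            _ ≤ ∑ a : Fin k, (if a < i then 1 else 0) :=
                Finset.sum_le_sum_of_subset (Finset.erase_subset _ _)
            _ = (Finset.univ.filter fun a => a < i).card := by
                rw [Finset.card_filter]
            _ = (i : ℕ) := by rw [Finset.filter_gt_eq_Iio, Fin.card_Iio]
        have hik : (i : ℕ) < k := i.isLt
        omega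

lemma pairList_prod {k : ℕ} {M : Type*} [CommMonoid M] (h : Fin k × Fin k → M) :
    ((pairList k).map h).prod = ∏ i : Fin k, ∏ j ∈ Finset.Ioi i, h (i, j) := by
  classical
  rw [pairList, List.map_flatMap, List.flatMap_def, List.prod_flatten, List.map_map,
    Fin.prod_univ_def]
  congr 1
  apply List.map_congr_left
  intro a _
  simp only [Function.comp_apply, List.map_map]
  have hfin : ((List.finRange k).filter fun j => a < j).toFinset = Finset.Ioi a := by
    rw [List.toFinset_filter, List.toFinset_finRange]
    ext x; simp
  rw [← hfin, List.prod_toFinset _ ((List.nodup_finRange k).filter _)]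
  rfl

/-! ### Vandermonde determinant algebra -/

open Equiv

variable {R : Type*} [CommRing R]

lemma neg_one_sq_pow (c : ℕ) : ((-1 : R) ^ c) * ((-1 : R) ^ c) = 1 := by
  rw [← pow_add]
  exact Even.neg_one_pow ⟨c, rfl⟩

lemma prod_Ioi_sub_eq {k : ℕ} (v : Fin k → R) :
    (∏ i : Fin k, ∏ j ∈ Finset.Ioi i, (v i - v j))
      = (-1 : R) ^ (∑ i : Fin k, (Finset.Ioi i).card) * (Matrix.vandermonde v).det := by
  rw [Matrix.det_vandermonde]
  rw [← Finset.prod_pow_eq_pow_sum, ← Finset.prod_mul_distrib]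
  apply Finset.prod_congr rfl
  intro i _
  rw [← Finset.prod_const, ← Finset.prod_mul_distrib]
  exact Finset.prod_congr rfl fun j _ => by ring

lemma prod_Ioi_sub_mul {k : ℕ} (v w : Fin k → R) :
    (∏ i : Fin k, ∏ j ∈ Finset.Ioi i, (v i - v j))
      * (∏ i : Fin k, ∏ j ∈ Finset.Ioi i, (w i - w j))
      = (Matrix.vandermonde v).det * (Matrix.vandermonde w).det := by
  rw [prod_Ioi_sub_eq, prod_Ioi_sub_eq]
  set c := ∑ i : Fin k, (Finset.Ioi i).card
  calc ((-1:R)^c * _) * ((-1:R)^c * _)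
      = ((-1:R)^c * (-1:R)^c) * ((Matrix.vandermonde v).det * (Matrix.vandermonde w).det) := by
        ring
    _ = _ := by rw [neg_one_sq_pow, one_mul]

lemma det_vandermonde_expand {k : ℕ} (v : Fin k → R) :
    (Matrix.vandermonde v).det
      = ∑ σ : Perm (Fin k), ((Perm.sign σ : ℤ) : R) * ∏ i : Fin k, v i ^ ((σ i : Fin k) : ℕ) := by
  rw [Matrix.det_apply']
  rw [← Equiv.sum_comp (Equiv.inv (Perm (Fin k)))
    (fun ρ => ((Perm.sign ρ : ℤ) : R) * ∏ i : Fin k, v i ^ ((ρ i : Fin k) : ℕ))]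
  apply Finset.sum_congr rfl
  intro σ _
  simp only [Equiv.inv_apply, Perm.sign_inv]
  congr 1
  have := Equiv.prod_comp σ (fun j => v j ^ ((σ⁻¹ j : Fin k) : ℕ))
  rw [← this]
  apply Finset.prod_congr rfl
  intro i _
  rw [Perm.inv_def, Equiv.symm_apply_apply]
  rfl

lemma perm_double_sum {k : ℕ} (A : Matrix (Fin k) (Fin k) R) :
    ∑ σ : Perm (Fin k), ∑ τ : Perm (Fin k),
      (((Perm.sign σ : ℤ) : R) * ((Perm.sign τ : ℤ) : R)) * ∏ i : Fin k, A (σ i) (τ i)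
      = (k ! : R) * A.det := by
  have sign_sq : ∀ σ : Perm (Fin k), ((Perm.sign σ : ℤ) : R) * ((Perm.sign σ : ℤ) : R) = 1 := by
    intro σ
    have h := Int.units_mul_self (Perm.sign σ)
    have : ((Perm.sign σ : ℤ) * (Perm.sign σ : ℤ)) = 1 := by
      rw [← Units.val_mul, h, Units.val_one]
    calc ((Perm.sign σ : ℤ) : R) * ((Perm.sign σ : ℤ) : R)
        = (((Perm.sign σ : ℤ) * (Perm.sign σ : ℤ) : ℤ) : R) := by push_cast; ring
      _ = 1 := by rw [this]; norm_num
  have inner : ∀ σ : Perm (Fin k),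
      ∑ τ : Perm (Fin k),
        (((Perm.sign σ : ℤ) : R) * ((Perm.sign τ : ℤ) : R)) * ∏ i : Fin k, A (σ i) (τ i)
        = A.det := by
    intro σ
    have step1 : ∀ τ : Perm (Fin k),
        (∏ i : Fin k, A (σ i) (τ i)) = ∏ j : Fin k, A j ((τ * σ⁻¹) j) := by
      intro τ
      simp only [Perm.mul_apply]
      rw [← Equiv.prod_comp σ (fun j => A j (τ (σ⁻¹ j)))]
      exact Finset.prod_congr rfl fun i _ => by rw [Perm.inv_def, Equiv.symm_apply_apply]
    calc ∑ τ : Perm (Fin k),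
          (((Perm.sign σ : ℤ) : R) * ((Perm.sign τ : ℤ) : R)) * ∏ i : Fin k, A (σ i) (τ i)
        = ∑ τ : Perm (Fin k),
          (((Perm.sign σ : ℤ) : R) * ((Perm.sign τ : ℤ) : R)) * ∏ j : Fin k, A j ((τ * σ⁻¹) j) := by
          exact Finset.sum_congr rfl fun τ _ => by rw [step1]
      _ = ∑ ρ : Perm (Fin k),
          (((Perm.sign σ : ℤ) : R) * ((Perm.sign (ρ * σ) : ℤ) : R)) * ∏ j : Fin k, A j (ρ j) := by
          rw [← Equiv.sum_comp (Equiv.mulRight σ)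
            (fun τ => (((Perm.sign σ : ℤ) : R) * ((Perm.sign τ : ℤ) : R))
              * ∏ j : Fin k, A j ((τ * σ⁻¹) j))]
          apply Finset.sum_congr rfl
          intro ρ _
          simp only [Equiv.coe_mulRight]
          congr 1
          exact Finset.prod_congr rfl fun j _ => by rw [mul_inv_cancel_right]
      _ = ∑ ρ : Perm (Fin k), ((Perm.sign ρ : ℤ) : R) * ∏ j : Fin k, A j (ρ j) := by
          apply Finset.sum_congr rfl
          intro ρ _
          congr 1
          rw [Perm.sign_mul]
          push_cast
          calc ((Perm.sign σ : ℤ) : R) * (((Perm.sign ρ : ℤ) : R) * ((Perm.sign σ : ℤ) : R))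
              = ((Perm.sign ρ : ℤ) : R) * (((Perm.sign σ : ℤ) : R) * ((Perm.sign σ : ℤ) : R)) := by
                ring
            _ = _ := by rw [sign_sq, mul_one]
      _ = A.transpose.det := by
          rw [Matrix.det_apply']
          exact Finset.sum_congr rfl fun ρ _ => by
            congr 1
      _ = A.det := Matrix.det_transpose A
  calc ∑ σ : Perm (Fin k), ∑ τ : Perm (Fin k),
        (((Perm.sign σ : ℤ) : R) * ((Perm.sign τ : ℤ) : R)) * ∏ i : Fin k, A (σ i) (τ i)
      = ∑ _σ : Perm (Fin k), A.det := Finset.sum_congr rfl fun σ _ => inner σ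
    _ = (k ! : R) * A.det := by
        rw [Finset.sum_const, Finset.card_univ, Fintype.card_perm, Fintype.card_fin,
          nsmul_eq_mul]

/-! ### Monomials attached to pairs of permutations -/

lemma prod_monomial_one {k : ℕ} {ι : Type*} (s : Finset ι) (d : ι → ((Fin k ⊕ Fin k) →₀ ℕ)) :
    ∏ i ∈ s, MvPolynomial.monomial (d i) (1 : ℝ)
      = MvPolynomial.monomial (∑ i ∈ s, d i) 1 := by
  classical
  induction s using Finset.induction_on with
  | empty => simp [MvPolynomial.monomial_zero']
  | insert _ _ h ih =>
      rw [Finset.prod_insert h, Finset.sum_insert h, ih, MvPolynomial.monomial_mul, mul_one]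

noncomputable def mE {k : ℕ} (σ τ : Perm (Fin k)) : (Fin k ⊕ Fin k) →₀ ℕ :=
  (∑ i : Fin k, Finsupp.single (Sum.inl i) ((σ i : Fin k) : ℕ))
    + ∑ i : Fin k, Finsupp.single (Sum.inr i) ((τ i : Fin k) : ℕ)

lemma mE_inl {k : ℕ} (σ τ : Perm (Fin k)) (i : Fin k) :
    mE σ τ (Sum.inl i) = ((σ i : Fin k) : ℕ) := by
  classical
  simp [mE, Finsupp.finset_sum_apply, Finsupp.single_apply]

lemma mE_inr {k : ℕ} (σ τ : Perm (Fin k)) (i : Fin k) :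
    mE σ τ (Sum.inr i) = ((τ i : Fin k) : ℕ) := by
  classical
  simp [mE, Finsupp.finset_sum_apply, Finsupp.single_apply]

lemma prod_X_pow_mul {k : ℕ} (σ τ : Perm (Fin k)) :
    ((∏ i : Fin k, (MvPolynomial.X (Sum.inl i) : MvPolynomial (Fin k ⊕ Fin k) ℝ)
        ^ ((σ i : Fin k) : ℕ))
      * ∏ i : Fin k, (MvPolynomial.X (Sum.inr i) : MvPolynomial (Fin k ⊕ Fin k) ℝ)
        ^ ((τ i : Fin k) : ℕ))
      = MvPolynomial.monomial (mE σ τ) 1 := by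
  classical
  have h1 : (∏ i : Fin k, (MvPolynomial.X (Sum.inl i) : MvPolynomial (Fin k ⊕ Fin k) ℝ)
      ^ ((σ i : Fin k) : ℕ))
      = MvPolynomial.monomial (∑ i : Fin k, Finsupp.single (Sum.inl i) ((σ i : Fin k) : ℕ)) 1 := by
    rw [← prod_monomial_one]
    exact Finset.prod_congr rfl fun i _ => MvPolynomial.X_pow_eq_monomial
  have h2 : (∏ i : Fin k, (MvPolynomial.X (Sum.inr i) : MvPolynomial (Fin k ⊕ Fin k) ℝ)
      ^ ((τ i : Fin k) : ℕ))
      = MvPolynomial.monomial (∑ i : Fin k, Finsupp.single (Sum.inr i) ((τ i : Fin k) : ℕ)) 1 := by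
    rw [← prod_monomial_one]
    exact Finset.prod_congr rfl fun i _ => MvPolynomial.X_pow_eq_monomial
  rw [h1, h2, MvPolynomial.monomial_mul, mul_one]
  rfl

end VDX

/-- For a sufficiently smooth `f : ℝ² → ℝ`, applying `Δ(d/dx)` and `Δ(d/dy)` to
`∏_{i=1}^k f(xᵢ, yᵢ)` and evaluating at `x₁ = ⋯ = x_k = X`, `y₁ = ⋯ = y_k = Y` gives
`k! · det_{k×k}( ∂^{i+j−2} f / ∂X^{i−1} ∂Y^{j−1} (X, Y) )`. -/
theorem vandermondeDxDy_prod {k : ℕ} (f : ℝ → ℝ → ℝ)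
    (hf : ContDiff ℝ ((2 * (k - 1) : ℕ) : ℕ∞) (Function.uncurry f)) (X Y : ℝ) :
    vandermondeDx (vandermondeDy
        (fun z : (Fin k → ℝ) × (Fin k → ℝ) => ∏ i, f (z.1 i) (z.2 i)))
        (fun _ => X, fun _ => Y)
      = (k ! : ℝ) * Matrix.det (Matrix.of fun i j : Fin k =>
          iteratedDeriv (j : ℕ) (fun y => iteratedDeriv (i : ℕ) (fun x => f x y) X) Y) := by
  classical
  open VDX MvPolynomial Equiv in
  set N : ℕ := 2 * (k - 1) with hN
  -- Step 0: the base product function is `Ev f 1`.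
  have hF0 : (fun z : (Fin k → ℝ) × (Fin k → ℝ) => ∏ i, f (z.1 i) (z.2 i))
      = Ev f (1 : MvPolynomial (Fin k ⊕ Fin k) ℝ) := by
    funext z
    have h1 : (1 : MvPolynomial (Fin k ⊕ Fin k) ℝ) = monomial 0 1 := by
      rw [MvPolynomial.monomial_zero', map_one]
    rw [h1, Ev_monomial, one_mul, bF]
    exact (Finset.prod_congr rfl fun i _ => rfl).symm
  -- membership facts for the support of 1
  have hsupp1 : ∀ m ∈ (1 : MvPolynomial (Fin k ⊕ Fin k) ℝ).support,
      m = (0 : (Fin k ⊕ Fin k) →₀ ℕ) := by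
    intro m hm
    rw [MvPolynomial.mem_support_iff, MvPolynomial.coeff_one] at hm
    by_contra h
    simp [Ne.symm h] at hm
  -- Step 1: the y-operators.
  have hstep1 : vandermondeDy (Ev f (1 : MvPolynomial (Fin k ⊕ Fin k) ℝ))
      = Ev f (VYp (pairList k) * 1) := by
    apply opsY_Ev hf
    intro m hm i
    have h0 := hsupp1 m hm
    subst h0
    have := cnt_pairList_le (k := k) i
    constructor
    · simp
    · simp only [Finsupp.coe_zero, Pi.zero_apply, zero_add]
      omega
  -- Step 2: the x-operators.
  have hstep2 : vandermondeDx (Ev f (VYp (pairList k) * 1))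
      = Ev f (VXp (pairList k) * (VYp (pairList k) * 1)) := by
    apply opsX_Ev hf
    intro m hm i
    rw [mul_one] at hm
    have hb := VYp_support (pairList k) m hm
    have h1 := hb.1 i
    have h2 := hb.2 i
    have h3 := cnt_pairList_le (k := k) i
    omega
  rw [hF0, hstep1, hstep2]
  -- Step 3: algebraic identification of the polynomial.
  set z0 : (Fin k → ℝ) × (Fin k → ℝ) := (fun _ => X, fun _ => Y) with hz0
  have hVX : VXp (pairList k)
      = ∏ i : Fin k, ∏ j ∈ Finset.Ioi i,
          ((MvPolynomial.X (Sum.inl i) : MvPolynomial (Fin k ⊕ Fin k) ℝ)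
            - MvPolynomial.X (Sum.inl j)) := by
    rw [VXp, pairList_prod (fun p => (MvPolynomial.X (Sum.inl p.1) :
      MvPolynomial (Fin k ⊕ Fin k) ℝ) - MvPolynomial.X (Sum.inl p.2))]
  have hVY : VYp (pairList k)
      = ∏ i : Fin k, ∏ j ∈ Finset.Ioi i,
          ((MvPolynomial.X (Sum.inr i) : MvPolynomial (Fin k ⊕ Fin k) ℝ)
            - MvPolynomial.X (Sum.inr j)) := by
    rw [VYp, pairList_prod (fun p => (MvPolynomial.X (Sum.inr p.1) :
      MvPolynomial (Fin k ⊕ Fin k) ℝ) - MvPolynomial.X (Sum.inr p.2))]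
  have hpoly : VXp (pairList k) * (VYp (pairList k) * 1)
      = ∑ σ : Perm (Fin k), ∑ τ : Perm (Fin k),
          MvPolynomial.monomial (mE σ τ)
            (((Perm.sign σ : ℤ) : ℝ) * ((Perm.sign τ : ℤ) : ℝ)) := by
    rw [mul_one, hVX, hVY,
      prod_Ioi_sub_mul (fun i => (MvPolynomial.X (Sum.inl i) : MvPolynomial (Fin k ⊕ Fin k) ℝ))
        (fun i => (MvPolynomial.X (Sum.inr i) : MvPolynomial (Fin k ⊕ Fin k) ℝ)),
      det_vandermonde_expand, det_vandermonde_expand, Finset.sum_mul_sum]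
    apply Finset.sum_congr rfl
    intro σ _
    apply Finset.sum_congr rfl
    intro τ _
    rw [mul_mul_mul_comm, prod_X_pow_mul]
    have hcast : ∀ q : ℤˣ, ((q : ℤ) : MvPolynomial (Fin k ⊕ Fin k) ℝ)
        = MvPolynomial.C (((q : ℤ) : ℝ)) := fun q =>
      (map_intCast (MvPolynomial.C : ℝ →+* MvPolynomial (Fin k ⊕ Fin k) ℝ) (q : ℤ)).symm
    rw [hcast, hcast, ← map_mul, MvPolynomial.C_mul_monomial, mul_one]
  rw [hpoly]
  -- Step 4: evaluate.
  set A : Matrix (Fin k) (Fin k) ℝ :=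
    Matrix.of (fun a b : Fin k => Gd f ((a : Fin k) : ℕ) ((b : Fin k) : ℕ) (X, Y)) with hA
  have hEv : Ev f (∑ σ : Perm (Fin k), ∑ τ : Perm (Fin k),
      MvPolynomial.monomial (mE σ τ)
        (((Perm.sign σ : ℤ) : ℝ) * ((Perm.sign τ : ℤ) : ℝ))) z0
      = ∑ σ : Perm (Fin k), ∑ τ : Perm (Fin k),
          (((Perm.sign σ : ℤ) : ℝ) * ((Perm.sign τ : ℤ) : ℝ)) * ∏ i : Fin k, A (σ i) (τ i) := by
    rw [Ev_sum]
    apply Finset.sum_congr rfl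
    intro σ _
    rw [Ev_sum]
    apply Finset.sum_congr rfl
    intro τ _
    rw [Ev_monomial]
    congr 1
    rw [bF]
    apply Finset.prod_congr rfl
    intro i _
    rw [mE_inl, mE_inr]
    rfl
  rw [hEv, perm_double_sum]
  -- Step 5: identify the matrices.
  congr 2
  ext i j
  rw [hA]
  show Gd f ((i : Fin k) : ℕ) ((j : Fin k) : ℕ) (X, Y)
      = iteratedDeriv (j : ℕ) (fun y => iteratedDeriv (i : ℕ) (fun x => f x y) X) Y
  rw [Gd]
  symm
  apply matrix_entry_eq hf
  have hi : (i : ℕ) < k := i.isLt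
  have hj : (j : ℕ) < k := j.isLt
  omega
end

section
/- Partial derivative of the tau determinant in x: with T̃_{k,ℓ}(x,y) = det_{k×k}(g̃_{2i−j+ℓ}(x,y)) where ∂g̃_m/∂x = g̃_{m−1}, one has ∂T̃_{k,ℓ}/∂x = det of the (k+1)×(k+1) matrix A_{k+1,ℓ} = (g̃_{2i−j+ℓ})_{1≤i,j≤k+1} with row k+1 and column k removed. -/
open scoped Nat

/-- `g̃_m(x,y) = Σ_{j ≥ 0, m+2j ≥ 0} x^{m+2j} y^j / (j! (m+2j)!)`. -/
noncomputable def gTilde (m : ℤ) (x y : ℂ) : ℂ :=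
  ∑' j : ℕ, if 0 ≤ m + 2 * (j : ℤ) then
    x ^ (m + 2 * (j : ℤ)).toNat * y ^ j / ((j ! : ℂ) * ((m + 2 * (j : ℤ)).toNat ! : ℂ))
  else 0

/-- The two-variable tau function `T̃_{k,ℓ}(x,y) = det_{k×k}(g̃_{2i−j+ℓ}(x,y))`. -/
noncomputable def tauTilde (k : ℕ) (ℓ : ℤ) (x y : ℂ) : ℂ :=
  Matrix.det (Matrix.of fun i j : Fin k => gTilde (2 * (i : ℤ) - (j : ℤ) + 1 + ℓ) x y)

/-- The `(k+1) × (k+1)` matrix `A_{k+1,ℓ}` with `(i,j)` entry `g̃_{2i−j+ℓ}(x,y)`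
(1-based `i, j ∈ {1, …, k+1}`, realized with 0-based `Fin (k+1)` indices). -/
noncomputable def Amat (k : ℕ) (ℓ : ℤ) (x y : ℂ) : Matrix (Fin (k + 1)) (Fin (k + 1)) ℂ :=
  Matrix.of fun i j : Fin (k + 1) => gTilde (2 * (i : ℤ) - (j : ℤ) + 1 + ℓ) x y

private lemma term_bound (a j : ℕ) (z y : ℂ) (R : ℝ) (hz : ‖z‖ ≤ R) :
    ‖z ^ a * y ^ j / ((j ! : ℂ) * (a ! : ℂ))‖ ≤ Real.exp R * (‖y‖ ^ j / j !) := by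
  have hR0 : (0:ℝ) ≤ R := le_trans (norm_nonneg z) hz
  have h1 : ‖z ^ a * y ^ j / ((j ! : ℂ) * (a ! : ℂ))‖
      = (‖z‖ ^ a / a !) * (‖y‖ ^ j / j !) := by
    rw [norm_div, norm_mul, norm_mul, norm_pow, norm_pow, Complex.norm_natCast,
      Complex.norm_natCast]
    ring
  rw [h1]
  have h2 : ‖z‖ ^ a / (a ! : ℝ) ≤ Real.exp R := by
    calc ‖z‖ ^ a / (a ! : ℝ) ≤ R ^ a / (a ! : ℝ) := by
          gcongr
      _ ≤ Real.exp R := Real.pow_div_factorial_le_exp R hR0 a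

  exact mul_le_mul_of_nonneg_right h2 (by positivity)

lemma gTilde_hasDerivAt (m : ℤ) (y x : ℂ) :
    HasDerivAt (fun x' => gTilde m x' y) (gTilde (m - 1) x y) x := by
  set R : ℝ := ‖x‖ + 1 with hR
  have hxR : ‖x‖ ≤ R := by simp [hR]
  set F : ℕ → ℂ → ℂ := fun j z =>
    if 0 ≤ m + 2 * (j : ℤ) then
      z ^ (m + 2 * (j : ℤ)).toNat * y ^ j / ((j ! : ℂ) * ((m + 2 * (j : ℤ)).toNat ! : ℂ))
    else 0 with hF
  set F' : ℕ → ℂ → ℂ := fun j z =>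
    if 0 ≤ m - 1 + 2 * (j : ℤ) then
      z ^ (m - 1 + 2 * (j : ℤ)).toNat * y ^ j / ((j ! : ℂ) * ((m - 1 + 2 * (j : ℤ)).toNat ! : ℂ))
    else 0 with hF'
  have key : ∀ (j : ℕ) (z : ℂ), HasDerivAt (F j) (F' j z) z := by
    intro j z
    by_cases h1 : 0 ≤ m + 2 * (j : ℤ)
    · by_cases h2 : 0 ≤ m - 1 + 2 * (j : ℤ)
      · set b := (m - 1 + 2 * (j : ℤ)).toNat with hb
        have ha : (m + 2 * (j : ℤ)).toNat = b + 1 := by omega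
        have hFeq : F j = fun z => z ^ (b + 1) * y ^ j / ((j ! : ℂ) * ((b + 1)! : ℂ)) := by
          funext w; simp only [hF, if_pos h1, ha]
        rw [hFeq]
        have hd := (((hasDerivAt_pow (b + 1) z).mul_const (y ^ j)).div_const
          ((j ! : ℂ) * ((b + 1)! : ℂ)))
        refine hd.congr_deriv (Eq.symm ?_)
        simp only [hF', if_pos h2, ← hb]
        have hbf : ((b ! : ℕ) : ℂ) ≠ 0 := Nat.cast_ne_zero.mpr (Nat.factorial_ne_zero b)
        have hjf : ((j ! : ℕ) : ℂ) ≠ 0 := Nat.cast_ne_zero.mpr (Nat.factorial_ne_zero j)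
        have hb1 : ((b : ℂ) + 1) ≠ 0 := Nat.cast_add_one_ne_zero b
        have hden1 : ((j ! : ℂ) * (((b : ℂ) + 1) * (b ! : ℂ))) ≠ 0 :=
          mul_ne_zero hjf (mul_ne_zero hb1 hbf)
        have hden2 : ((j ! : ℂ) * (b ! : ℂ)) ≠ 0 := mul_ne_zero hjf hbf
        rw [Nat.factorial_succ, Nat.add_sub_cancel]
        push_cast
        rw [div_eq_div_iff hden2 hden1]
        ring
      · have h0 : m + 2 * (j : ℤ) = 0 := by omega
        have hFeq : F j = fun _ => y ^ j / ((j ! : ℂ) * (((0:ℤ).toNat)! : ℂ)) := by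
          funext w; simp only [hF, if_pos h1, h0, pow_zero, Int.toNat_zero, one_mul]
        rw [hFeq]
        have : F' j z = 0 := by simp only [hF', if_neg h2]
        rw [this]
        exact hasDerivAt_const _ _
    · have h2 : ¬ (0 ≤ m - 1 + 2 * (j : ℤ)) := by omega
      have hFeq : F j = fun _ => (0 : ℂ) := by funext w; simp only [hF, if_neg h1]
      rw [hFeq]
      have : F' j z = 0 := by simp only [hF', if_neg h2]
      rw [this]
      exact hasDerivAt_const _ _
  have hu : Summable (fun j : ℕ => Real.exp R * (‖y‖ ^ j / j !)) :=
    (Real.summable_pow_div_factorial ‖y‖).mul_left _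
  have bound' : ∀ (j : ℕ) (z : ℂ), ‖z‖ ≤ R → ‖F' j z‖ ≤ Real.exp R * (‖y‖ ^ j / j !) := by
    intro j z hz
    simp only [hF']
    split_ifs with h
    · exact term_bound _ j z y R hz
    · simpa using mul_nonneg (Real.exp_nonneg R) (by positivity)
  have boundF : ∀ (j : ℕ) (z : ℂ), ‖z‖ ≤ R → ‖F j z‖ ≤ Real.exp R * (‖y‖ ^ j / j !) := by
    intro j z hz
    simp only [hF]
    split_ifs with h
    · exact term_bound _ j z y R hz
    · simpa using mul_nonneg (Real.exp_nonneg R) (by positivity)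
  have hsum : Summable (fun j : ℕ => F j x) :=
    Summable.of_norm_bounded hu (fun j => boundF j x hxR)
  have hmem : x ∈ Metric.ball (0 : ℂ) R := by
    simp only [Metric.mem_ball, dist_zero_right]
    simp [hR]
  have H := hasDerivAt_tsum_of_isPreconnected hu Metric.isOpen_ball
    ((convex_ball (0:ℂ) R).isPreconnected) (fun j z _ => key j z)
    (fun j z hz => bound' j z (by
      simpa [dist_zero_right] using (Metric.mem_ball.mp hz).le)) hmem hsum hmem
  exact H


open Finset in
lemma hasDerivAt_det {n : ℕ} {M : ℂ → Matrix (Fin n) (Fin n) ℂ}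
    {M' : Matrix (Fin n) (Fin n) ℂ} {x : ℂ}
    (h : ∀ i j, HasDerivAt (fun z => M z i j) (M' i j) x) :
    HasDerivAt (fun z => (M z).det)
      (∑ c : Fin n, ((M x).updateCol c (fun i => M' i c)).det) x := by
  have H := HasDerivAt.fun_sum (u := (univ : Finset (Equiv.Perm (Fin n))))
    (A := fun σ z => ((Equiv.Perm.sign σ : ℤ) : ℂ) * ∏ i, M z (σ i) i)
    (A' := fun σ => ((Equiv.Perm.sign σ : ℤ) : ℂ) *
      ∑ i, (∏ j ∈ univ.erase i, M x (σ j) j) • M' (σ i) i)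
    (fun σ _ => (HasDerivAt.fun_finsetProd (u := (univ : Finset (Fin n)))
      (f := fun i z => M z (σ i) i) (f' := fun i => M' (σ i) i)
      (fun i _ => h (σ i) i)).const_mul _)
  have hfun : (fun z => (M z).det)
      = fun z => ∑ σ : Equiv.Perm (Fin n), ((Equiv.Perm.sign σ : ℤ) : ℂ) * ∏ i, M z (σ i) i :=
    funext fun z => Matrix.det_apply' (M z)
  rw [hfun]
  refine H.congr_deriv (Eq.symm ?_)
  have expand : ∀ (c : Fin n) (σ : Equiv.Perm (Fin n)),
      (∏ i, ((M x).updateCol c (fun r => M' r c)) (σ i) i)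
        = M' (σ c) c * ∏ i ∈ univ.erase c, M x (σ i) i := by
    intro c σ
    rw [← Finset.mul_prod_erase univ _ (mem_univ c)]
    congr 1
    · simp [Matrix.updateCol_apply]
    · exact Finset.prod_congr rfl fun i hi => by
        simp [Matrix.updateCol_apply, Finset.ne_of_mem_erase hi]
  simp only [Matrix.det_apply', expand, smul_eq_mul, Finset.mul_sum]
  rw [Finset.sum_comm]
  refine Finset.sum_congr rfl fun σ _ => Finset.sum_congr rfl fun c _ => by ring

/-- `∂T̃_{k,ℓ}/∂x` equals the determinant of `A_{k+1,ℓ}` with row `k+1` and column `k`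
removed (rows `1, …, k` kept via `Fin.castSucc`; column `k`, i.e. 0-based index `k−1`,
skipped via `Fin.succAbove`). -/
theorem deriv_x_tauTilde (k : ℕ) (hk : 1 ≤ k) (ℓ : ℤ) (x y : ℂ) :
    deriv (fun x' => tauTilde k ℓ x' y) x
      = Matrix.det ((Amat k ℓ x y).submatrix Fin.castSucc
          (Fin.succAbove ⟨k - 1, by omega⟩)) := by
  set M : ℂ → Matrix (Fin k) (Fin k) ℂ :=
    fun z => Matrix.of fun i j : Fin k => gTilde (2 * (i : ℤ) - (j : ℤ) + 1 + ℓ) z y with hM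
  set M' : Matrix (Fin k) (Fin k) ℂ :=
    Matrix.of (fun i j : Fin k => gTilde (2 * (i : ℤ) - (j : ℤ) + ℓ) x y) with hM'
  have hent : ∀ i j : Fin k, HasDerivAt (fun z => M z i j) (M' i j) x := by
    intro i j
    have := gTilde_hasDerivAt (2 * (i : ℤ) - (j : ℤ) + 1 + ℓ) y x
    rw [show (2 * (i : ℤ) - (j : ℤ) + 1 + ℓ - 1) = 2 * (i : ℤ) - (j : ℤ) + ℓ by ring] at this
    exact this
  have H := (hasDerivAt_det hent).deriv
  have hfun : (fun x' => tauTilde k ℓ x' y) = fun z => (M z).det := rfl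
  rw [hfun, H]
  set c₀ : Fin k := ⟨k - 1, by omega⟩ with hc₀
  rw [Finset.sum_eq_single c₀ ?_ (by simp)]
  · -- the surviving term equals the submatrix determinant
    congr 1
    ext i j
    simp only [Matrix.updateCol_apply, Matrix.submatrix_apply, Amat, Matrix.of_apply, hM, hM']
    have hsa : (((⟨k - 1, by omega⟩ : Fin (k + 1)).succAbove j) : ℕ)
        = if (j : ℕ) < k - 1 then (j : ℕ) else (j : ℕ) + 1 := by
      rw [Fin.succAbove]
      split_ifs with h h' h'
      · rfl
      · exact absurd (by simpa [Fin.lt_def] using h) h'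
      · exact absurd (by simpa [Fin.lt_def] using h') h
      · rfl
    by_cases hj : j = c₀
    · rw [if_pos hj, hsa]
      rw [if_neg (by simp [hj, hc₀])]
      have : (j : ℕ) = k - 1 := by rw [hj]
      rw [this]
      congr 1
      simp only [hc₀, Fin.val_mk]
      push_cast [Nat.cast_sub hk, Fin.coe_castSucc]
      ring
    · rw [if_neg hj, hsa]
      have hjlt : (j : ℕ) < k - 1 := by
        have := j.isLt
        have : (j : ℕ) ≠ k - 1 := fun hh => hj (Fin.ext (by simp [hc₀, hh]))
        omega
      rw [if_pos hjlt]
      simp [Fin.coe_castSucc]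
  · -- all other terms vanish
    intro c _ hc
    have hclt : (c : ℕ) < k - 1 := by
      have := c.isLt
      have : (c : ℕ) ≠ k - 1 := fun hh => hc (Fin.ext (by simp [hc₀, hh]))
      omega
    set c' : Fin k := ⟨(c : ℕ) + 1, by omega⟩ with hc'
    apply Matrix.det_zero_of_column_eq (show c ≠ c' from by simp [hc', Fin.ext_iff])
    intro i
    rw [Matrix.updateCol_apply, if_pos rfl, Matrix.updateCol_apply,
      if_neg (by simp [hc', Fin.ext_iff])]
    simp only [hM, hM', Matrix.of_apply, hc']
    congr 1
    push_cast
    ring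
end

section
/- Main recurrence (Theorem 4): Let T_{k,ℓ}(u) = det_{k×k}(g_{2i−j+ℓ}(u)), where g_m(u) = Σ_{j≥0, m+2j≥0} u^j/(j!(m+2j)!) and T_{0,ℓ} := 1. Then for every integer k ≥ 1 and ℓ ∈ ℤ and all u ∈ ℂ: T_{k+1,ℓ}(u)·T_{k−1,ℓ}(u) = 2( u·T_{k,ℓ}(u)·T_{k,ℓ}''(u) + T_{k,ℓ}(u)·T_{k,ℓ}'(u) − u·(T_{k,ℓ}'(u))² ). -/
open scoped Nat

/-- The entire function `g_m(u) = Σ_{j ≥ 0, m+2j ≥ 0} u^j / (j! (m+2j)!)`. -/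
noncomputable def gFun (m : ℤ) (u : ℂ) : ℂ :=
  ∑' j : ℕ, if 0 ≤ m + 2 * (j : ℤ) then
    u ^ j / ((j ! : ℂ) * ((m + 2 * (j : ℤ)).toNat ! : ℂ)) else 0

/-- `T_{k,ℓ}(u) = det_{k×k}(g_{2i−j+ℓ}(u))` with `i, j ∈ {1, …, k}` (0-based indices,
so the `(i,j)` entry is `g_{2i−j+1+ℓ}`), and `T_{0,ℓ} = 1` (the empty determinant). -/
noncomputable def tauT (k : ℕ) (ℓ : ℤ) (u : ℂ) : ℂ :=
  Matrix.det (Matrix.of fun i j : Fin k => gFun (2 * (i : ℤ) - (j : ℤ) + 1 + ℓ) u)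


open Matrix Polynomial

noncomputable def gCoeff (m : ℤ) (j : ℕ) : ℂ :=
  if 0 ≤ m + 2 * (j : ℤ) then ((j ! : ℂ) * ((m + 2 * (j : ℤ)).toNat ! : ℂ))⁻¹ else 0

lemma gFun_eq_tsum (m : ℤ) (u : ℂ) : gFun m u = ∑' j : ℕ, gCoeff m j * u ^ j := by
  unfold gFun gCoeff
  congr 1; funext j
  split
  · rw [div_eq_mul_inv, mul_comm]
  · simp

lemma gCoeff_norm (m : ℤ) (j : ℕ) : ‖gCoeff m j‖ ≤ ((j ! : ℝ))⁻¹ := by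
  unfold gCoeff
  split
  · have h1 : ((j ! : ℂ) * (((m + 2 * (j : ℤ)).toNat !) : ℂ)) = ((j ! * (m + 2 * (j : ℤ)).toNat ! : ℕ) : ℂ) := by
      push_cast; ring
    rw [h1, norm_inv, Complex.norm_natCast]
    rw [inv_le_inv₀]
    · exact_mod_cast Nat.le_mul_of_pos_right _ (Nat.factorial_pos _)
    · exact_mod_cast Nat.mul_pos (Nat.factorial_pos _) (Nat.factorial_pos _)
    · exact_mod_cast Nat.factorial_pos _
  · simp only [norm_zero]
    positivity

lemma summable_gCoeff (m : ℤ) (u : ℂ) : Summable (fun j : ℕ => gCoeff m j * u ^ j) := by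
  apply Summable.of_norm
  have hle : ∀ j : ℕ, ‖gCoeff m j * u ^ j‖ ≤ ‖u‖ ^ j / (j ! : ℝ) := by
    intro j
    rw [norm_mul, norm_pow, div_eq_mul_inv, mul_comm (‖u‖ ^ j)]
    exact mul_le_mul_of_nonneg_right (gCoeff_norm m j) (by positivity)
  exact Summable.of_nonneg_of_le (fun j => norm_nonneg _) hle
    (Real.summable_pow_div_factorial ‖u‖)

lemma summable_deriv_bound (R : ℝ) :
    Summable (fun j : ℕ => ((j ! : ℝ))⁻¹ * (j * R ^ (j - 1))) := by
  rw [← summable_nat_add_iff 1]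
  apply Summable.congr (Real.summable_pow_div_factorial R)
  intro n
  have h : ((n + 1)! : ℝ) = (n + 1) * (n ! : ℝ) := by
    push_cast [Nat.factorial_succ]; ring
  rw [h]
  have h1 : ((n:ℝ) + 1) ≠ 0 := by positivity
  have h2 : (n ! : ℝ) ≠ 0 := by positivity
  field_simp
  simp only [Nat.add_sub_cancel]; push_cast; ring

lemma gCoeff_succ_mul (m : ℤ) (n : ℕ) :
    gCoeff m (n + 1) * ((n : ℂ) + 1) = gCoeff (m + 2) n := by
  unfold gCoeff
  have hc : (0 ≤ m + 2 * ((n : ℤ) + 1)) ↔ (0 ≤ m + 2 + 2 * (n : ℤ)) := by omega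
  have harg : m + 2 * (((n:ℕ) + 1 : ℕ) : ℤ) = m + 2 + 2 * (n : ℤ) := by push_cast; ring
  rw [harg]
  split_ifs with h
  · have hf : (((n + 1)!) : ℂ) = ((n : ℂ) + 1) * (n ! : ℂ) := by
      push_cast [Nat.factorial_succ]; ring
    rw [hf]
    have h1 : ((n:ℂ) + 1) ≠ 0 := by
      exact_mod_cast (Nat.cast_ne_zero (R := ℂ)).mpr (Nat.succ_ne_zero n)
    have h2 : (n ! : ℂ) ≠ 0 := by exact_mod_cast Nat.cast_ne_zero.mpr (Nat.factorial_ne_zero n)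
    have h3 : (((m + 2 + 2 * (n : ℤ)).toNat !) : ℂ) ≠ 0 := by
      exact_mod_cast Nat.cast_ne_zero.mpr (Nat.factorial_ne_zero _)
    field_simp
  · simp

lemma hasDerivAt_gFun (m : ℤ) (u : ℂ) : HasDerivAt (gFun m) (gFun (m + 2) u) u := by
  have hfun : gFun m = fun z => ∑' j : ℕ, gCoeff m j * z ^ j := funext (gFun_eq_tsum m)
  set R : ℝ := ‖u‖ + 1 with hR
  have hRpos : 0 < R := by positivity
  have hmem : u ∈ Metric.ball (0:ℂ) R := by
    simp [hR, Metric.mem_ball, dist_zero_right]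
  have hder : HasDerivAt (fun z => ∑' j : ℕ, gCoeff m j * z ^ j)
      (∑' j : ℕ, gCoeff m j * (j * u ^ (j - 1))) u := by
    apply hasDerivAt_tsum_of_isPreconnected (summable_deriv_bound R)
      Metric.isOpen_ball (convex_ball (0:ℂ) R).isPreconnected
      (fun j z _ => (hasDerivAt_pow j z).const_mul (gCoeff m j)) ?_ hmem
      (summable_gCoeff m u) hmem
    intro j z hz
    rw [norm_mul, norm_mul, norm_pow, Complex.norm_natCast]
    have hz' : ‖z‖ ≤ R := le_of_lt (by simpa [dist_zero_right] using hz)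
    calc ‖gCoeff m j‖ * ((j:ℝ) * ‖z‖ ^ (j-1))
        ≤ ((j ! : ℝ))⁻¹ * ((j:ℝ) * R ^ (j-1)) := by
          apply mul_le_mul (gCoeff_norm m j) ?_ (by positivity) (by positivity)
          exact mul_le_mul_of_nonneg_left (pow_le_pow_left₀ (norm_nonneg z) hz' _) (by positivity)
      _ = _ := rfl
  rw [hfun, gFun_eq_tsum]
  convert hder using 1
  have hs : Summable (fun j : ℕ => gCoeff m j * ((j:ℂ) * u ^ (j - 1))) := by
    apply Summable.of_norm
    apply Summable.of_nonneg_of_le (fun j => norm_nonneg _) ?_ (summable_deriv_bound R)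
    intro j
    rw [norm_mul, norm_mul, norm_pow, Complex.norm_natCast]
    apply mul_le_mul (gCoeff_norm m j) ?_ (by positivity) (by positivity)
    apply mul_le_mul_of_nonneg_left ?_ (by positivity)
    exact pow_le_pow_left₀ (norm_nonneg u) (by simp [hR]) _
  rw [Summable.tsum_eq_zero_add hs]
  simp only [Nat.cast_zero, zero_mul, mul_zero, zero_add]
  apply tsum_congr
  intro n
  simp only [Nat.add_sub_cancel]
  rw [← gCoeff_succ_mul m n]
  push_cast
  ring

lemma gCoeff_zero_rec (m : ℤ) : gCoeff (m - 1) 0 = m * gCoeff m 0 := by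
  unfold gCoeff
  rcases (by omega : m ≤ 0 ∨ 1 ≤ m) with hm | hm
  · rw [if_neg (by push_cast; omega)]
    rcases (by omega : m < 0 ∨ m = 0) with h | h
    · rw [if_neg (by push_cast; omega)]; ring
    · subst h; simp
  · rw [if_pos (by push_cast; omega), if_pos (by push_cast; omega)]
    set M : ℕ := (m - 1 + 2 * ((0:ℕ):ℤ)).toNat with hM
    have h2 : (m + 2 * ((0:ℕ):ℤ)).toNat = M + 1 := by omega
    rw [h2]
    have hm' : (m : ℂ) = (M : ℂ) + 1 := by
      have : m = (M : ℤ) + 1 := by omega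
      rw [this]; push_cast; ring
    rw [hm']
    have hf : (((M+1)!) : ℂ) = ((M:ℂ)+1) * (M ! : ℂ) := by push_cast [Nat.factorial_succ]; ring
    rw [hf]
    have h3 : (M ! : ℂ) ≠ 0 := Nat.cast_ne_zero.mpr (Nat.factorial_ne_zero M)
    have h4 : ((M:ℂ)+1) ≠ 0 := by
      have := Nat.cast_ne_zero (R := ℂ).mpr (Nat.succ_ne_zero M)
      push_cast at this; exact_mod_cast this
    simp only [Nat.factorial_zero, Nat.cast_one, one_mul]
    field_simp

lemma gCoeff_rec (m : ℤ) (j : ℕ) :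
    gCoeff (m - 1) (j + 1) = m * gCoeff m (j + 1) + 2 * gCoeff (m + 2) j := by
  unfold gCoeff
  have h3 : (j ! : ℂ) ≠ 0 := Nat.cast_ne_zero.mpr (Nat.factorial_ne_zero j)
  have h4 : ((j:ℂ)+1) ≠ 0 := by
    have := Nat.cast_ne_zero (R := ℂ).mpr (Nat.succ_ne_zero j)
    push_cast at this; exact_mod_cast this
  have hf : (((j+1)!) : ℂ) = ((j:ℂ)+1) * (j ! : ℂ) := by push_cast [Nat.factorial_succ]; ring
  rcases (by omega : m + 2*(j:ℤ) ≤ -3 ∨ m + 2*(j:ℤ) = -2 ∨ m + 2*(j:ℤ) = -1 ∨ 0 ≤ m + 2*(j:ℤ))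
    with hs | hs | hs | hs
  · rw [if_neg (by push_cast; omega), if_neg (by push_cast; omega),
      if_neg (by push_cast; omega)]
    ring
  · rw [if_neg (by push_cast; omega), if_pos (by push_cast; omega),
      if_pos (by push_cast; omega)]
    have h1 : (m + 2 * (((j+1):ℕ):ℤ)).toNat = 0 := by push_cast; omega
    have h2 : (m + 2 + 2 * (j:ℤ)).toNat = 0 := by omega
    rw [h1, h2]
    have hm : (m:ℂ) = -2 - 2*(j:ℂ) := by
      have hmz : m = -2 - 2*(j:ℤ) := by omega
      rw [hmz]; push_cast; ring
    rw [hm, hf]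
    simp only [Nat.factorial_zero, Nat.cast_one, mul_one]
    field_simp
    ring
  · rw [if_pos (by push_cast; omega), if_pos (by push_cast; omega),
      if_pos (by push_cast; omega)]
    have h1 : (m - 1 + 2 * (((j+1):ℕ):ℤ)).toNat = 0 := by push_cast; omega
    have h2 : (m + 2 * (((j+1):ℕ):ℤ)).toNat = 1 := by push_cast; omega
    have h2' : (m + 2 + 2 * (j:ℤ)).toNat = 1 := by omega
    rw [h1, h2, h2']
    have hm : (m:ℂ) = -1 - 2*(j:ℂ) := by
      have hmz : m = -1 - 2*(j:ℤ) := by omega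
      rw [hmz]; push_cast; ring
    rw [hm, hf]
    simp only [Nat.factorial_zero, Nat.factorial_one, Nat.cast_one, mul_one]
    field_simp
    ring
  · rw [if_pos (by push_cast; omega), if_pos (by push_cast; omega),
      if_pos (by push_cast; omega)]
    set N : ℕ := (m + 2*(j:ℤ)).toNat with hN
    have h1 : (m - 1 + 2 * (((j+1):ℕ):ℤ)).toNat = N + 1 := by push_cast; omega
    have h2 : (m + 2 * (((j+1):ℕ):ℤ)).toNat = N + 2 := by push_cast; omega
    have h2' : (m + 2 + 2 * (j:ℤ)).toNat = N + 2 := by omega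
    rw [h1, h2, h2']
    have hm : (m:ℂ) = (N:ℂ) - 2*(j:ℂ) := by
      have hmz : m = (N:ℤ) - 2*(j:ℤ) := by omega
      rw [hmz]; push_cast; ring
    have hg1 : (((N+1)!) : ℂ) = ((N:ℂ)+1) * (N ! : ℂ) := by push_cast [Nat.factorial_succ]; ring
    have hg2 : (((N+2)!) : ℂ) = ((N:ℂ)+2) * (((N+1)!) : ℂ) := by
      have : (N+2)! = (N+2) * (N+1)! := Nat.factorial_succ (N+1)
      rw [this]; push_cast; ring
    have h5 : (N ! : ℂ) ≠ 0 := Nat.cast_ne_zero.mpr (Nat.factorial_ne_zero N)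
    have h6 : ((N:ℂ)+1) ≠ 0 := by
      have := Nat.cast_ne_zero (R := ℂ).mpr (Nat.succ_ne_zero N)
      push_cast at this; exact_mod_cast this
    have h7 : ((N:ℂ)+2) ≠ 0 := by
      have := Nat.cast_ne_zero (R := ℂ).mpr (Nat.succ_ne_zero (N+1))
      push_cast at this; exact_mod_cast this
    rw [hm, hf, hg2, hg1]
    rw [inv_eq_one_div, inv_eq_one_div, inv_eq_one_div, mul_one_div, mul_one_div]
    have hA : ((j:ℂ)+1) * ↑j ! * (((N:ℂ)+1) * ↑N !) ≠ 0 :=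
      mul_ne_zero (mul_ne_zero h4 h3) (mul_ne_zero h6 h5)
    have hB : ((j:ℂ)+1) * ↑j ! * (((N:ℂ)+2) * (((N:ℂ)+1) * ↑N !)) ≠ 0 :=
      mul_ne_zero (mul_ne_zero h4 h3) (mul_ne_zero h7 (mul_ne_zero h6 h5))
    have hC : (↑j ! : ℂ) * (((N:ℂ)+2) * (((N:ℂ)+1) * ↑N !)) ≠ 0 :=
      mul_ne_zero h3 (mul_ne_zero h7 (mul_ne_zero h6 h5))
    rw [div_add_div _ _ hB hC, div_eq_div_iff hA (mul_ne_zero hB hC)]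
    ring

set_option maxHeartbeats 1000000 in
lemma gFun_rec (m : ℤ) (u : ℂ) :
    gFun (m - 1) u = m * gFun m u + 2 * u * gFun (m + 2) u := by
  rw [gFun_eq_tsum, gFun_eq_tsum, gFun_eq_tsum]
  have hs1 := summable_gCoeff m u
  have hs2 := summable_gCoeff (m + 2) u
  have hs0 := summable_gCoeff (m - 1) u
  have hs1' : Summable (fun n : ℕ => gCoeff m (n+1) * u ^ (n+1)) :=
    (summable_nat_add_iff 1).mpr hs1
  rw [Summable.tsum_eq_zero_add hs0, Summable.tsum_eq_zero_add hs1]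
  simp only [pow_zero, mul_one]
  rw [gCoeff_zero_rec]
  have hterm : ∀ n : ℕ, gCoeff (m-1) (n+1) * u^(n+1)
      = m * (gCoeff m (n+1) * u^(n+1)) + (2*u) * (gCoeff (m+2) n * u^n) := by
    intro n; rw [gCoeff_rec]; ring
  rw [tsum_congr hterm]
  have hA : Summable (fun n : ℕ => (m:ℂ) * (gCoeff m (n+1) * u ^ (n+1))) := hs1'.mul_left _
  have hB : Summable (fun n : ℕ => (2*u) * (gCoeff (m+2) n * u ^ n)) := hs2.mul_left _
  rw [Summable.tsum_add hA hB, tsum_mul_left, tsum_mul_left]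
  ring


section DetDeriv

variable {n : ℕ}

lemma hasDerivAt_det_row {A : ℂ → Matrix (Fin n) (Fin n) ℂ}
    {A' : Matrix (Fin n) (Fin n) ℂ} {u : ℂ}
    (h : ∀ i j, HasDerivAt (fun z => A z i j) (A' i j) u) :
    HasDerivAt (fun z => (A z).det)
      (∑ r : Fin n, ((A u).updateRow r (A' r)).det) u := by
  have hfun : (fun z => (A z).det)
      = fun z => ∑ σ : Equiv.Perm (Fin n), ((Equiv.Perm.sign σ : ℤ) : ℂ) * ∏ i, A z (σ i) i := by
    funext z; exact Matrix.det_apply' (A z)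
  rw [hfun]
  have key : ∀ σ : Equiv.Perm (Fin n),
      HasDerivAt (fun z => ∏ i, A z (σ i) i)
        (∑ i, (∏ j ∈ Finset.univ.erase i, A u (σ j) j) • A' (σ i) i) u :=
    fun σ => HasDerivAt.fun_finsetProd (fun i _ => h (σ i) i)
  have hda : HasDerivAt
      (fun z => ∑ σ : Equiv.Perm (Fin n), ((Equiv.Perm.sign σ : ℤ) : ℂ) * ∏ i, A z (σ i) i)
      (∑ σ : Equiv.Perm (Fin n), ((Equiv.Perm.sign σ : ℤ) : ℂ) *
        ∑ i, (∏ j ∈ Finset.univ.erase i, A u (σ j) j) • A' (σ i) i) u :=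
    HasDerivAt.fun_sum (fun σ _ => (key σ).const_mul _)
  convert hda using 1
  -- now an algebraic identity between two finite sums
  simp only [Matrix.det_apply', smul_eq_mul]
  rw [Finset.sum_comm]
  apply Finset.sum_congr rfl
  intro σ _
  rw [Finset.mul_sum]
  rw [← Equiv.sum_comp σ
    (fun r => ((Equiv.Perm.sign σ : ℤ) : ℂ) * ∏ j, (A u).updateRow r (A' r) (σ j) j)]
  apply Finset.sum_congr rfl
  intro i _
  congr 1
  rw [← Finset.mul_prod_erase Finset.univ _ (Finset.mem_univ i), Matrix.updateRow_self, mul_comm]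
  congr 1
  apply Finset.prod_congr rfl
  intro j hj
  exact congrFun (Matrix.updateRow_ne (fun hc => (Finset.mem_erase.mp hj).1 (σ.injective hc))) j

lemma hasDerivAt_det_col {A : ℂ → Matrix (Fin n) (Fin n) ℂ}
    {A' : Matrix (Fin n) (Fin n) ℂ} {u : ℂ}
    (h : ∀ i j, HasDerivAt (fun z => A z i j) (A' i j) u) :
    HasDerivAt (fun z => (A z).det)
      (∑ c : Fin n, ((A u).updateCol c (fun i => A' i c)).det) u := by
  have hfun : (fun z => (A z).det) = fun z => ((A z).transpose).det := by
    funext z; rw [Matrix.det_transpose]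
  rw [hfun]
  have hval : (∑ c : Fin n, ((A u).updateCol c (fun i => A' i c)).det)
      = ∑ r : Fin n, (((A u)ᵀ).updateRow r (A'ᵀ r)).det := by
    apply Finset.sum_congr rfl
    intro c _
    rw [Matrix.updateRow_transpose, Matrix.det_transpose]
    rfl
  rw [hval]
  exact hasDerivAt_det_row (A := fun z => (A z)ᵀ) (A' := A'ᵀ) (fun i j => h j i)

lemma det_sum_updateColumn_smul (M : Matrix (Fin n) (Fin n) ℂ) (d : Fin n → ℂ) :
    ∑ c : Fin n, (M.updateCol c (fun i => d i * M i c)).det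
      = (∑ i, d i) * M.det := by
  simp only [Matrix.det_apply']
  have hterm : ∀ c : Fin n, ∀ σ : Equiv.Perm (Fin n),
      (∏ i, (M.updateCol c fun i => d i * M i c) (σ i) i)
        = d (σ c) * ∏ i, M (σ i) i := by
    intro c σ
    rw [← Finset.mul_prod_erase Finset.univ (fun i => M (σ i) i) (Finset.mem_univ c),
      ← mul_assoc, ← Finset.mul_prod_erase Finset.univ _ (Finset.mem_univ c)]
    congr 1
    · rw [Matrix.updateCol_self]
    · apply Finset.prod_congr rfl
      intro j hj
      exact Matrix.updateCol_ne (Finset.mem_erase.mp hj).1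
  rw [Finset.sum_comm]
  rw [Finset.mul_sum]
  apply Finset.sum_congr rfl
  intro σ _
  simp only [hterm]
  rw [← Finset.mul_sum, ← Finset.sum_mul, Equiv.sum_comp σ d]
  ring

end DetDeriv


section DJ

variable {R : Type*} [CommRing R]

/-- determinant of the identity matrix with two columns replaced -/
lemma det_one_updateColumn_two {N : Type*} [DecidableEq N] [Fintype N]
    (p q : N) (hpq : p ≠ q) (v w : N → R) :
    (((1 : Matrix N N R).updateCol p v).updateCol q w).det
      = v p * w q - v q * w p := by
  set B := ((1 : Matrix N N R).updateCol p v).updateCol q w with hB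
  have hBapply : ∀ i j, B i j
      = if j = q then w i else if j = p then v i else if i = j then 1 else 0 := by
    intro i j
    simp [hB, Matrix.updateCol_apply, Matrix.one_apply]
  have h1s : (1 : Equiv.Perm N) ∉ ({Equiv.swap p q} : Finset (Equiv.Perm N)) := by
    simp only [Finset.mem_singleton]
    intro hc
    have := congrArg (fun σ : Equiv.Perm N => σ p) hc
    simp [Equiv.swap_apply_left] at this
    exact hpq this
  rw [Matrix.det_apply']
  rw [← Finset.sum_subset (Finset.subset_univ (insert (1 : Equiv.Perm N) {Equiv.swap p q}))]
  · rw [Finset.sum_insert h1s, Finset.sum_singleton]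
    have hterm1 : ∏ i, B ((1 : Equiv.Perm N) i) i = v p * w q := by
      have hme : p ∈ (Finset.univ.erase q) := Finset.mem_erase.mpr ⟨hpq, Finset.mem_univ p⟩
      rw [show (∏ i, B ((1 : Equiv.Perm N) i) i) = ∏ i, B i i from rfl,
        ← Finset.mul_prod_erase Finset.univ _ (Finset.mem_univ q),
        ← Finset.mul_prod_erase _ _ hme]
      have hrest : ∏ i ∈ (Finset.univ.erase q).erase p, B i i = 1 := by
        apply Finset.prod_eq_one
        intro i hi
        have h1 := (Finset.mem_erase.mp hi).1
        have h2 := (Finset.mem_erase.mp (Finset.mem_erase.mp hi).2).1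
        rw [hBapply, if_neg h2, if_neg h1, if_pos rfl]
      have e1 : B p p = v p := by rw [hBapply, if_neg hpq, if_pos rfl]
      have e2 : B q q = w q := by rw [hBapply, if_pos rfl]
      rw [hrest, e1, e2]
      ring
    have hterm2 : ∏ i, B (Equiv.swap p q i) i = v q * w p := by
      have hme : p ∈ (Finset.univ.erase q) := Finset.mem_erase.mpr ⟨hpq, Finset.mem_univ p⟩
      rw [← Finset.mul_prod_erase Finset.univ _ (Finset.mem_univ q),
        ← Finset.mul_prod_erase _ _ hme]
      have hrest : ∏ i ∈ (Finset.univ.erase q).erase p, B (Equiv.swap p q i) i = 1 := by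
        apply Finset.prod_eq_one
        intro i hi
        have h1 := (Finset.mem_erase.mp hi).1
        have h2 := (Finset.mem_erase.mp (Finset.mem_erase.mp hi).2).1
        rw [Equiv.swap_apply_of_ne_of_ne h1 h2, hBapply, if_neg h2, if_neg h1, if_pos rfl]
      have e1 : B p q = w p := by rw [hBapply, if_pos rfl]
      have e2 : B q p = v q := by rw [hBapply, if_neg hpq, if_pos rfl]
      rw [hrest, Equiv.swap_apply_right, Equiv.swap_apply_left, e1, e2]
      ring
    rw [hterm1, hterm2]
    simp [Equiv.Perm.sign_swap hpq]
    ring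
  · intro σ _ hσ
    -- σ is neither the identity nor the swap; find a point outside {p,q} moved by σ
    have hex : ∃ i, (i ≠ p ∧ i ≠ q) ∧ σ i ≠ i := by
      by_contra hcon
      push_neg at hcon
      have hfix : ∀ i, i ≠ p → i ≠ q → σ i = i := fun i h1 h2 => hcon i ⟨h1, h2⟩
      have hp : σ p = p ∨ σ p = q := by
        by_contra h
        push_neg at h
        have := hfix (σ p) h.1 h.2
        exact h.1 (σ.injective this)
      have hq : σ q = p ∨ σ q = q := by
        by_contra h
        push_neg at h
        have := hfix (σ q) h.1 h.2
        exact h.2 (σ.injective this)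
      rcases hp with hp | hp
      · have hq' : σ q = q := by
          rcases hq with hq | hq
          · exact absurd (σ.injective (hq.trans hp.symm)) (Ne.symm hpq)
          · exact hq
        apply hσ
        simp only [Finset.mem_insert]
        left
        ext i
        by_cases h1 : i = p
        · simp [h1, hp]
        · by_cases h2 : i = q
          · simp [h2, hq']
          · simp [hfix i h1 h2]
      · have hq' : σ q = p := by
          rcases hq with hq | hq
          · exact hq
          · exact absurd (σ.injective (hq.trans hp.symm)) (Ne.symm hpq)
        apply hσ
        simp only [Finset.mem_insert, Finset.mem_singleton]
        right
        ext i
        by_cases h1 : i = p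
        · simp [h1, hp, Equiv.swap_apply_left]
        · by_cases h2 : i = q
          · simp [h2, hq', Equiv.swap_apply_right]
          · simp [hfix i h1 h2, Equiv.swap_apply_of_ne_of_ne h1 h2]
    obtain ⟨i, ⟨hip, hiq⟩, hmove⟩ := hex
    have hzero : B (σ i) i = 0 := by
      rw [hBapply, if_neg hiq, if_neg hip, if_neg hmove]
    rw [Finset.prod_eq_zero (f := fun x => B (σ x) x) (Finset.mem_univ i) hzero, mul_zero]

end DJ

section DJ2

variable {R : Type*} [CommRing R]

lemma my_updateColumn_comm {N : Type*} [DecidableEq N] {α : Type*}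
    (M : Matrix N N α) {p q : N} (h : p ≠ q) (v w : N → α) :
    (M.updateCol p v).updateCol q w = (M.updateCol q w).updateCol p v := by
  ext i j
  simp only [Matrix.updateCol_apply]
  by_cases h1 : j = q <;> by_cases h2 : j = p
  · exact absurd (h2.symm.trans h1) h
  · simp [h1, h2, h, Ne.symm h]
  · simp [h1, h2, h, Ne.symm h]
  · simp [h1, h2, h, Ne.symm h]

lemma mul_one_updateColumn_two {N : Type*} [DecidableEq N] [Fintype N]
    (M : Matrix N N R) (p q : N) (hpq : p ≠ q) (v w : N → R) :
    M * (((1 : Matrix N N R).updateCol p v).updateCol q w)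
      = (M.updateCol p (M.mulVec v)).updateCol q (M.mulVec w) := by
  ext i j
  rw [Matrix.mul_apply]
  by_cases hq : j = q
  · subst hq
    simp [Matrix.updateCol_self, Matrix.mulVec, dotProduct]
  · by_cases hp : j = p
    · subst hp
      simp [Matrix.updateCol_ne hq, Matrix.updateCol_apply, hpq, hq,
        Matrix.mulVec, dotProduct]
    · simp only [Matrix.updateCol_ne hq, Matrix.updateCol_ne hp, Matrix.one_apply,
        mul_ite, mul_one, mul_zero]
      rw [Finset.sum_ite_eq' Finset.univ j (fun k => M i k)]
      simp

lemma det_updateColumn_last_single {N : ℕ} (A : Matrix (Fin (N+1)) (Fin (N+1)) R) (c : R) :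
    (A.updateCol (Fin.last N) (fun i => if i = Fin.last N then c else 0)).det
      = c * (A.submatrix Fin.castSucc Fin.castSucc).det := by
  rw [Matrix.det_succ_column _ (Fin.last N), Finset.sum_eq_single (Fin.last N)]
  · rw [Matrix.updateCol_self, if_pos rfl]
    have hval : ((Fin.last N : ℕ) + (Fin.last N : ℕ)) = N + N := by simp [Fin.val_last]
    rw [hval, Even.neg_one_pow ⟨N, rfl⟩, one_mul, Fin.succAbove_last]
    have hXY : (A.updateCol (Fin.last N) (fun i => if i = Fin.last N then c else 0)).submatrix
          Fin.castSucc Fin.castSucc = A.submatrix Fin.castSucc Fin.castSucc := by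
      ext r s
      simp only [Matrix.submatrix_apply]
      exact Matrix.updateCol_ne (Fin.castSucc_lt_last s).ne
    rw [hXY]
  · intro i _ hi
    rw [Matrix.updateCol_self, if_neg hi, mul_zero, zero_mul]
  · simp

lemma det_two_single_columns {n : ℕ} (M : Matrix (Fin (n+2)) (Fin (n+2)) R) :
    ((M.updateCol ((Fin.last n).castSucc)
        (fun i => if i = (Fin.last n).castSucc then (1:R) else 0)).updateCol
        (Fin.last (n+1)) (fun i => if i = Fin.last (n+1) then (1:R) else 0)).det
      = (M.submatrix (Fin.castSucc ∘ Fin.castSucc) (Fin.castSucc ∘ Fin.castSucc)).det := by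
  rw [det_updateColumn_last_single]
  have hsub : (M.updateCol ((Fin.last n).castSucc)
        (fun i => if i = (Fin.last n).castSucc then (1:R) else 0)).submatrix
          Fin.castSucc Fin.castSucc
      = (M.submatrix Fin.castSucc Fin.castSucc).updateCol (Fin.last n)
          (fun i => if i = Fin.last n then (1:R) else 0) := by
    ext r s
    by_cases hs : s = Fin.last n
    · subst hs
      rw [Matrix.updateCol_self]
      simp only [Matrix.submatrix_apply]
      rw [Matrix.updateCol_self]
      simp [Fin.castSucc_inj]
    · rw [Matrix.updateCol_ne hs]
      simp only [Matrix.submatrix_apply]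
      rw [Matrix.updateCol_ne (fun hc => hs (Fin.castSucc_inj.mp hc))]
  rw [hsub, det_updateColumn_last_single, Matrix.submatrix_submatrix, one_mul, one_mul]

lemma adjugate_eq_minor {N : ℕ} (A : Matrix (Fin (N+1)) (Fin (N+1)) R) (i j : Fin (N+1)) :
    Matrix.adjugate A i j
      = (-1)^((i:ℕ)+(j:ℕ)) * (A.submatrix j.succAbove i.succAbove).det := by
  rw [Matrix.adjugate_apply, Matrix.det_succ_row _ j, Finset.sum_eq_single i]
  · rw [Matrix.updateRow_self, Pi.single_eq_same, mul_one, add_comm ((j:ℕ)) ((i:ℕ))]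
    have hXY : (A.updateRow j (Pi.single i 1)).submatrix j.succAbove i.succAbove
        = A.submatrix j.succAbove i.succAbove := by
      ext r s
      simp only [Matrix.submatrix_apply]
      exact congrFun (Matrix.updateRow_ne (Fin.succAbove_ne j r)) _
    rw [hXY]
  · intro c _ hc
    rw [Matrix.updateRow_self, Pi.single_eq_of_ne hc, mul_zero, zero_mul]
  · simp

end DJ2

section DJ3

variable {R : Type*} [CommRing R] {n : ℕ}

lemma dj_key (M : Matrix (Fin (n+2)) (Fin (n+2)) R) :
    M.det * ((M.submatrix ((Fin.last n).castSucc).succAbove ((Fin.last n).castSucc).succAbove).det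
        * (M.submatrix Fin.castSucc Fin.castSucc).det
      - (M.submatrix ((Fin.last n).castSucc).succAbove Fin.castSucc).det
        * (M.submatrix Fin.castSucc ((Fin.last n).castSucc).succAbove).det)
    = M.det * (M.det
        * (M.submatrix (Fin.castSucc ∘ Fin.castSucc) (Fin.castSucc ∘ Fin.castSucc)).det) := by
  set pe : Fin (n+2) := (Fin.last n).castSucc with hpe
  set la : Fin (n+2) := Fin.last (n+1) with hla
  have hpl : pe ≠ la := (Fin.castSucc_lt_last (Fin.last n)).ne
  set v : Fin (n+2) → R := fun i => Matrix.adjugate M i pe with hv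
  set w : Fin (n+2) → R := fun i => Matrix.adjugate M i la with hw
  -- step 1 : det B
  have hB : (((1 : Matrix (Fin (n+2)) (Fin (n+2)) R).updateCol pe v).updateCol la w).det
      = v pe * w la - v la * w pe := det_one_updateColumn_two pe la hpl v w
  -- step 2 : M * B
  have hMB := mul_one_updateColumn_two M pe la hpl v w
  have hmv : ∀ r : Fin (n+2), M.mulVec (fun i => Matrix.adjugate M i r)
      = fun i => M.det * (if i = r then 1 else 0) := by
    intro r
    funext i
    have h1 : M.mulVec (fun k => Matrix.adjugate M k r) i = (M * Matrix.adjugate M) i r := by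
      simp [Matrix.mul_apply, Matrix.mulVec, dotProduct]
    rw [h1, Matrix.mul_adjugate]
    simp [Matrix.one_apply]
  -- step 3 : det (M * B)
  have hMBdet : M.det * (v pe * w la - v la * w pe)
      = M.det * (M.det
        * (M.submatrix (Fin.castSucc ∘ Fin.castSucc) (Fin.castSucc ∘ Fin.castSucc)).det) := by
    rw [← hB, ← Matrix.det_mul, hMB, hv, hw, hmv pe, hmv la]
    have hsc1 : (fun i => M.det * (if i = la then (1:R) else 0))
        = M.det • (fun i => if i = la then (1:R) else 0) := rfl
    have hsc2 : (fun i => M.det * (if i = pe then (1:R) else 0))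
        = M.det • (fun i => if i = pe then (1:R) else 0) := rfl
    rw [hsc1, Matrix.det_updateCol_smul, my_updateColumn_comm _ hpl, hsc2,
      Matrix.det_updateCol_smul, my_updateColumn_comm _ (Ne.symm hpl)]
    rw [det_two_single_columns]
  -- step 4 : convert v,w to minors
  have hvpe : v pe = (M.submatrix pe.succAbove pe.succAbove).det := by
    show Matrix.adjugate M pe pe = _
    rw [adjugate_eq_minor]
    have : ((pe:ℕ) + (pe:ℕ)) = n + n := by simp [hpe, Fin.val_last]
    rw [this, Even.neg_one_pow ⟨n, rfl⟩, one_mul]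
  have hwla : w la = (M.submatrix Fin.castSucc Fin.castSucc).det := by
    show Matrix.adjugate M la la = _
    rw [adjugate_eq_minor]
    have : ((la:ℕ) + (la:ℕ)) = (n+1) + (n+1) := by simp [hla, Fin.val_last]
    rw [this, Even.neg_one_pow ⟨n+1, rfl⟩, one_mul, Fin.succAbove_last]
  have hvla : v la = (-1)^((n+1)+n) * (M.submatrix pe.succAbove Fin.castSucc).det := by
    show Matrix.adjugate M la pe = _
    rw [adjugate_eq_minor]
    have : ((la:ℕ) + (pe:ℕ)) = (n+1) + n := by simp [hla, hpe, Fin.val_last]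
    rw [this, Fin.succAbove_last]
  have hwpe : w pe = (-1)^(n+(n+1)) * (M.submatrix Fin.castSucc pe.succAbove).det := by
    show Matrix.adjugate M pe la = _
    rw [adjugate_eq_minor]
    have : ((pe:ℕ) + (la:ℕ)) = n + (n+1) := by simp [hla, hpe, Fin.val_last]
    rw [this, Fin.succAbove_last]
  rw [← hMBdet, hvpe, hwla, hvla, hwpe]
  have hsign : ((-1:R)^((n+1)+n)) * ((-1:R)^(n+(n+1))) = 1 := by
    rw [← pow_add]
    exact Even.neg_one_pow ⟨2*n+1, by ring⟩
  have hexp : ((-1:R)^((n+1)+n) * (M.submatrix pe.succAbove Fin.castSucc).det)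
        * ((-1:R)^(n+(n+1)) * (M.submatrix Fin.castSucc pe.succAbove).det)
      = (M.submatrix pe.succAbove Fin.castSucc).det
        * (M.submatrix Fin.castSucc pe.succAbove).det := by
    calc ((-1:R)^((n+1)+n) * (M.submatrix pe.succAbove Fin.castSucc).det)
          * ((-1:R)^(n+(n+1)) * (M.submatrix Fin.castSucc pe.succAbove).det)
        = (((-1:R)^((n+1)+n)) * ((-1:R)^(n+(n+1))))
            * ((M.submatrix pe.succAbove Fin.castSucc).det
              * (M.submatrix Fin.castSucc pe.succAbove).det) := by ring
      _ = _ := by rw [hsign, one_mul]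
  rw [hexp]

lemma dodgson (M : Matrix (Fin (n+2)) (Fin (n+2)) ℂ) :
    (M.submatrix ((Fin.last n).castSucc).succAbove ((Fin.last n).castSucc).succAbove).det
        * (M.submatrix Fin.castSucc Fin.castSucc).det
      - (M.submatrix ((Fin.last n).castSucc).succAbove Fin.castSucc).det
        * (M.submatrix Fin.castSucc ((Fin.last n).castSucc).succAbove).det
    = M.det * (M.submatrix (Fin.castSucc ∘ Fin.castSucc) (Fin.castSucc ∘ Fin.castSucc)).det := by
  set N : Matrix (Fin (n+2)) (Fin (n+2)) (Polynomial ℂ) := Matrix.charmatrix (-M) with hN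
  have hdet : N.det ≠ 0 := by
    have : N.det = (-M).charpoly := rfl
    rw [this]
    exact (Matrix.charpoly_monic (-M)).ne_zero
  have hcancel := mul_left_cancel₀ hdet (dj_key N)
  have hmap : N.map (Polynomial.evalRingHom (0:ℂ)) = M := by
    ext i j
    by_cases h : i = j
    · subst h
      simp [hN, Matrix.charmatrix_apply_eq]
    · simp [hN, Matrix.charmatrix_apply_ne _ _ _ h]
  have := congrArg (Polynomial.evalRingHom (0:ℂ)) hcancel
  simp only [map_sub, _root_.map_mul] at this
  rw [RingHom.map_det, RingHom.map_det, RingHom.map_det, RingHom.map_det, RingHom.map_det,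
    RingHom.map_det] at this
  simp only [RingHom.mapMatrix_apply, ← Matrix.submatrix_map, hmap] at this
  exact this

end DJ3


/-- standard row/column labels -/
def stdL (k : ℕ) (i : Fin k) : ℤ := (i : ℤ)

/-- labels `0, 1, …, k-2, k` (the last one is bumped) -/
def labL (k : ℕ) (i : Fin k) : ℤ := if (i : ℕ) + 1 = k then (k : ℤ) else (i : ℤ)

noncomputable def Gmat (k : ℕ) (ℓ : ℤ) (r c : Fin k → ℤ) (u : ℂ) :
    Matrix (Fin k) (Fin k) ℂ :=
  Matrix.of fun i j => gFun (2 * r i - c j + 1 + ℓ) u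

lemma hasDerivAt_Gmat (k : ℕ) (ℓ : ℤ) (r c : Fin k → ℤ) (u : ℂ) :
    HasDerivAt (fun z => (Gmat k ℓ r c z).det)
      (∑ i0 : Fin k, ((Gmat k ℓ r c u).updateRow i0
          (fun j => gFun (2 * r i0 - c j + 3 + ℓ) u)).det) u := by
  exact hasDerivAt_det_row (A := fun z => Gmat k ℓ r c z)
      (A' := Matrix.of fun i j => gFun (2 * r i - c j + 3 + ℓ) u)
      (fun i j => by
        have harg : 2 * r i - c j + 1 + ℓ + 2 = 2 * r i - c j + 3 + ℓ := by ring
        have h := hasDerivAt_gFun (2 * r i - c j + 1 + ℓ) u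
        rw [harg] at h
        exact h)

lemma sum_updateRow_std (k : ℕ) (ℓ : ℤ) (c : Fin (k+1) → ℤ) (u : ℂ) :
    (∑ i0 : Fin (k+1), ((Gmat (k+1) ℓ (stdL (k+1)) c u).updateRow i0
        (fun j => gFun (2 * stdL (k+1) i0 - c j + 3 + ℓ) u)).det)
      = (Gmat (k+1) ℓ (labL (k+1)) c u).det := by
  rw [Finset.sum_eq_single (Fin.last k)]
  · congr 1
    ext i j
    rw [Matrix.updateRow_apply]
    by_cases h : i = Fin.last k
    · rw [if_pos h]
      subst h
      show gFun (2 * stdL (k+1) (Fin.last k) - c j + 3 + ℓ) u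
        = gFun (2 * labL (k+1) (Fin.last k) - c j + 1 + ℓ) u
      congr 1
      simp only [stdL, labL, Fin.val_last, if_pos rfl]
      push_cast
      ring
    · rw [if_neg h]
      show gFun (2 * stdL (k+1) i - c j + 1 + ℓ) u
        = gFun (2 * labL (k+1) i - c j + 1 + ℓ) u
      have h' : ¬((i:ℕ) + 1 = k + 1) := by
        intro hc
        exact h (Fin.ext (by simpa [Fin.val_last] using Nat.succ_injective hc))
      congr 1
      simp only [stdL, labL, if_neg h']
  · intro i0 _ hne
    have hval : (i0:ℕ) ≠ k := by
      intro hc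
      exact hne (Fin.ext (by simpa [Fin.val_last] using hc))
    have hlt : (i0:ℕ) < k := by
      have := i0.isLt
      omega
    set i1 : Fin (k+1) := ⟨(i0:ℕ)+1, by omega⟩ with hi1
    apply Matrix.det_zero_of_row_eq (i := i0) (j := i1)
    · intro hc
      have := congrArg Fin.val hc
      simp [hi1] at this
    · rw [Matrix.updateRow_self, Matrix.updateRow_ne (by
        intro hc
        have := congrArg Fin.val hc
        simp [hi1] at this)]
      funext j
      show gFun (2 * stdL (k+1) i0 - c j + 3 + ℓ) u = gFun (2 * stdL (k+1) i1 - c j + 1 + ℓ) u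
      congr 1
      simp only [stdL, hi1]
      push_cast
      ring
  · intro h
    exact absurd (Finset.mem_univ _) h

lemma Q_identity (k : ℕ) (ℓ : ℤ) (u : ℂ) :
    (Gmat (k+1) ℓ (stdL (k+1)) (labL (k+1)) u).det
      = ((∑ c : Fin (k+1), ((ℓ:ℂ) - ((c:ℕ):ℂ) + 1)) + 2 * ∑ i : Fin (k+1), ((i:ℕ):ℂ))
          * (Gmat (k+1) ℓ (stdL (k+1)) (stdL (k+1)) u).det
        + 2 * u * (Gmat (k+1) ℓ (labL (k+1)) (stdL (k+1)) u).det := by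
  set T : Matrix (Fin (k+1)) (Fin (k+1)) ℂ := Gmat (k+1) ℓ (stdL (k+1)) (stdL (k+1)) u with hT
  -- the three term column relation applied in column c
  have hE : ∀ c : Fin (k+1),
      (T.updateCol c (fun i => gFun (2 * (i:ℤ) - (c:ℤ) + ℓ) u)).det
        = ((ℓ:ℂ) - ((c:ℕ):ℂ) + 1) * T.det
          + 2 * (T.updateCol c (fun i => ((i:ℕ):ℂ) * T i c)).det
          + 2 * u * (T.updateCol c (fun i => gFun (2 * (i:ℤ) - (c:ℤ) + 3 + ℓ) u)).det := by
    intro c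
    have hcol : (fun i : Fin (k+1) => gFun (2 * (i:ℤ) - (c:ℤ) + ℓ) u)
        = ((((ℓ:ℂ) - ((c:ℕ):ℂ) + 1) • (fun i' : Fin (k+1) => T i' c)
              + (2:ℂ) • (fun i' : Fin (k+1) => ((i':ℕ):ℂ) * T i' c))
            + ((2 * u) • fun i' : Fin (k+1) => gFun (2 * (i':ℤ) - (c:ℤ) + 3 + ℓ) u)) := by
      funext i
      have h := gFun_rec (2 * (i:ℤ) - (c:ℤ) + 1 + ℓ) u
      rw [show 2 * (i:ℤ) - (c:ℤ) + 1 + ℓ - 1 = 2 * (i:ℤ) - (c:ℤ) + ℓ by ring,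
          show 2 * (i:ℤ) - (c:ℤ) + 1 + ℓ + 2 = 2 * (i:ℤ) - (c:ℤ) + 3 + ℓ by ring] at h
      rw [h]
      have hTic : T i c = gFun (2 * (i:ℤ) - (c:ℤ) + 1 + ℓ) u := rfl
      simp only [Pi.add_apply, Pi.smul_apply, smul_eq_mul, hTic]
      push_cast
      ring
    rw [hcol, Matrix.det_updateCol_add, Matrix.det_updateCol_add,
      Matrix.det_updateCol_smul, Matrix.det_updateCol_smul, Matrix.det_updateCol_smul,
      Matrix.updateCol_eq_self]
  -- summing the left hand sides gives the Q determinant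
  have hQ : (∑ c : Fin (k+1), (T.updateCol c (fun i => gFun (2 * (i:ℤ) - (c:ℤ) + ℓ) u)).det)
      = (Gmat (k+1) ℓ (stdL (k+1)) (labL (k+1)) u).det := by
    rw [Finset.sum_eq_single (Fin.last k)]
    · congr 1
      ext i j
      rw [Matrix.updateCol_apply]
      by_cases h : j = Fin.last k
      · rw [if_pos h]
        subst h
        show gFun (2 * (i:ℤ) - ((Fin.last k : ℕ):ℤ) + ℓ) u
          = gFun (2 * stdL (k+1) i - labL (k+1) (Fin.last k) + 1 + ℓ) u
        congr 1
        simp only [stdL, labL, Fin.val_last, if_pos rfl]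
        push_cast
        ring
      · rw [if_neg h]
        show T i j = gFun (2 * stdL (k+1) i - labL (k+1) j + 1 + ℓ) u
        have h' : ¬((j:ℕ) + 1 = k + 1) := by
          intro hc
          exact h (Fin.ext (by simpa [Fin.val_last] using Nat.succ_injective hc))
        show gFun (2 * stdL (k+1) i - stdL (k+1) j + 1 + ℓ) u
          = gFun (2 * stdL (k+1) i - labL (k+1) j + 1 + ℓ) u
        congr 1
        simp only [stdL, labL, if_neg h']
    · intro c _ hne
      have hval : (c:ℕ) ≠ k := by
        intro hc
        exact hne (Fin.ext (by simpa [Fin.val_last] using hc))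
      have hlt : (c:ℕ) < k := by
        have := c.isLt
        omega
      set c1 : Fin (k+1) := ⟨(c:ℕ)+1, by omega⟩ with hc1
      apply Matrix.det_zero_of_column_eq (i := c) (j := c1)
      · intro hc
        have := congrArg Fin.val hc
        simp [hc1] at this
      · intro r
        rw [Matrix.updateCol_self, Matrix.updateCol_ne (by
          intro hc
          have := congrArg Fin.val hc
          simp [hc1] at this)]
        show gFun (2 * (r:ℤ) - (c:ℤ) + ℓ) u = gFun (2 * stdL (k+1) r - stdL (k+1) c1 + 1 + ℓ) u
        congr 1
        simp only [stdL, hc1]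
        push_cast
        ring
    · intro h
      exact absurd (Finset.mem_univ _) h
  -- the trace identity
  have htr := det_sum_updateColumn_smul T (fun i => ((i:ℕ):ℂ))
  -- column-derivative = row-derivative
  have hYR : (∑ c : Fin (k+1),
        (T.updateCol c (fun i => gFun (2 * (i:ℤ) - (c:ℤ) + 3 + ℓ) u)).det)
      = (Gmat (k+1) ℓ (labL (k+1)) (stdL (k+1)) u).det := by
    have hrow : HasDerivAt (fun z => (Gmat (k+1) ℓ (stdL (k+1)) (stdL (k+1)) z).det)
        ((Gmat (k+1) ℓ (labL (k+1)) (stdL (k+1)) u).det) u := by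
      have h := hasDerivAt_Gmat (k+1) ℓ (stdL (k+1)) (stdL (k+1)) u
      rw [sum_updateRow_std] at h
      exact h
    have hcol : HasDerivAt (fun z => (Gmat (k+1) ℓ (stdL (k+1)) (stdL (k+1)) z).det)
        (∑ c : Fin (k+1),
          (T.updateCol c (fun i => gFun (2 * (i:ℤ) - (c:ℤ) + 3 + ℓ) u)).det) u := by
      exact hasDerivAt_det_col (A := fun z => Gmat (k+1) ℓ (stdL (k+1)) (stdL (k+1)) z)
        (A' := Matrix.of fun i j => gFun (2 * (i:ℤ) - (j:ℤ) + 3 + ℓ) u)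
        (fun i j => by
          have harg : 2 * stdL (k+1) i - stdL (k+1) j + 1 + ℓ + 2
              = 2 * (i:ℤ) - (j:ℤ) + 3 + ℓ := by simp [stdL]; ring
          have h := hasDerivAt_gFun (2 * stdL (k+1) i - stdL (k+1) j + 1 + ℓ) u
          rw [harg] at h
          exact h)
    exact hcol.unique hrow
  rw [← hQ]
  rw [Finset.sum_congr rfl (fun c _ => hE c)]
  rw [Finset.sum_add_distrib, Finset.sum_add_distrib, ← Finset.sum_mul, ← Finset.mul_sum,
    ← Finset.mul_sum, htr, hYR]
  ring

lemma lab_succAbove (m : ℕ) (r : Fin (m+1)) :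
    ((((Fin.last m).castSucc).succAbove r : Fin (m+2)) : ℤ) = labL (m+1) r := by
  by_cases h : r = Fin.last m
  · subst h
    rw [Fin.succAbove_of_le_castSucc _ _ (le_refl _)]
    simp [labL, Fin.val_last]
  · have hlt : Fin.castSucc r < (Fin.last m).castSucc := by
      rw [Fin.castSucc_lt_castSucc_iff]
      exact lt_of_le_of_ne (Fin.le_last r) (fun hc => h hc)
    rw [Fin.succAbove_of_castSucc_lt _ _ hlt]
    have h' : ¬((r:ℕ) + 1 = m + 1) := by
      intro hc
      exact h (Fin.ext (by simpa [Fin.val_last] using Nat.succ_injective hc))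
    simp [labL, h']
    omega

lemma submatrix_Gmat (m : ℕ) (ℓ : ℤ) (u : ℂ) (f g : Fin (m+1) → Fin (m+2))
    (r c : Fin (m+1) → ℤ)
    (hf : ∀ i, ((f i : Fin (m+2)) : ℤ) = r i) (hg : ∀ j, ((g j : Fin (m+2)) : ℤ) = c j) :
    (Gmat (m+2) ℓ (stdL (m+2)) (stdL (m+2)) u).submatrix f g = Gmat (m+1) ℓ r c u := by
  ext i j
  show gFun (2 * stdL (m+2) (f i) - stdL (m+2) (g j) + 1 + ℓ) u = gFun (2 * r i - c j + 1 + ℓ) u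
  congr 1
  simp only [stdL]
  rw [hf, hg]


/-- **Main recurrence.** For every integer `k ≥ 1`, `ℓ ∈ ℤ` and all `u ∈ ℂ`:
`T_{k+1,ℓ}(u) T_{k−1,ℓ}(u)
  = 2( u T_{k,ℓ}(u) T_{k,ℓ}''(u) + T_{k,ℓ}(u) T_{k,ℓ}'(u) − u (T_{k,ℓ}'(u))² )`. -/
theorem tauT_recurrence (k : ℕ) (hk : 1 ≤ k) (ℓ : ℤ) (u : ℂ) :
    tauT (k + 1) ℓ u * tauT (k - 1) ℓ u
      = 2 * (u * tauT k ℓ u * deriv (deriv (tauT k ℓ)) u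
          + tauT k ℓ u * deriv (tauT k ℓ) u
          - u * (deriv (tauT k ℓ) u) ^ 2) := by
  obtain ⟨m, rfl⟩ : ∃ m, k = m + 1 := ⟨k - 1, by omega⟩
  clear hk
  set γ : ℂ := (∑ c : Fin (m+1), ((ℓ:ℂ) - ((c:ℕ):ℂ) + 1)) + 2 * ∑ i : Fin (m+1), ((i:ℕ):ℂ)
    with hγ
  set Tf : ℂ → ℂ := fun z => (Gmat (m+1) ℓ (stdL (m+1)) (stdL (m+1)) z).det with hTf
  set Rf : ℂ → ℂ := fun z => (Gmat (m+1) ℓ (labL (m+1)) (stdL (m+1)) z).det with hRf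
  set Qf : ℂ → ℂ := fun z => (Gmat (m+1) ℓ (stdL (m+1)) (labL (m+1)) z).det with hQf
  set R2 : ℂ → ℂ := fun z => ∑ i0 : Fin (m+1),
      ((Gmat (m+1) ℓ (labL (m+1)) (stdL (m+1)) z).updateRow i0
        (fun j => gFun (2 * labL (m+1) i0 - stdL (m+1) j + 3 + ℓ) z)).det with hR2
  have htauT : tauT (m+1) ℓ = Tf := rfl
  -- derivative facts
  have hderT : ∀ z, HasDerivAt Tf (Rf z) z := by
    intro z
    have h := hasDerivAt_Gmat (m+1) ℓ (stdL (m+1)) (stdL (m+1)) z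
    rw [sum_updateRow_std] at h
    exact h
  have hderR : ∀ z, HasDerivAt Rf (R2 z) z := fun z =>
    hasDerivAt_Gmat (m+1) ℓ (labL (m+1)) (stdL (m+1)) z
  have hT'fun : deriv (tauT (m+1) ℓ) = Rf := by
    rw [htauT]; exact funext (fun z => (hderT z).deriv)
  have hT' : deriv (tauT (m+1) ℓ) u = Rf u := by rw [hT'fun]
  have hT'' : deriv (deriv (tauT (m+1) ℓ)) u = R2 u := by
    rw [hT'fun]; exact (hderR u).deriv
  -- derivative of Q is P
  have hderQ : HasDerivAt Qf
      ((Gmat (m+1) ℓ (labL (m+1)) (labL (m+1)) u).det) u := by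
    have h := hasDerivAt_Gmat (m+1) ℓ (stdL (m+1)) (labL (m+1)) u
    rw [sum_updateRow_std] at h
    exact h
  -- Q as a function
  have hQfun : Qf = fun z => γ * Tf z + 2 * z * Rf z := funext (fun z => Q_identity m ℓ z)
  have hderQ2 : HasDerivAt (fun z => γ * Tf z + 2 * z * Rf z)
      (γ * Rf u + (2 * Rf u + 2 * u * R2 u)) u := by
    apply HasDerivAt.add
    · exact (hderT u).const_mul γ
    · have h1 : HasDerivAt (fun z : ℂ => 2 * z) 2 u := by
        simpa using (hasDerivAt_id u).const_mul (2:ℂ)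
      have h2 := h1.mul (hderR u)
      exact h2
  have hPval : (Gmat (m+1) ℓ (labL (m+1)) (labL (m+1)) u).det
      = γ * Rf u + (2 * Rf u + 2 * u * R2 u) := by
    have h := hderQ
    rw [hQfun] at h
    exact h.unique hderQ2
  have hQval : Qf u = γ * Tf u + 2 * u * Rf u := by rw [hQfun]
  -- Dodgson condensation for the big matrix
  have hbig := dodgson (n := m) (Gmat (m+2) ℓ (stdL (m+2)) (stdL (m+2)) u)
  rw [submatrix_Gmat m ℓ u _ _ (labL (m+1)) (labL (m+1)) (lab_succAbove m) (lab_succAbove m),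
    submatrix_Gmat m ℓ u _ _ (stdL (m+1)) (stdL (m+1))
      (fun i => by simp [stdL]) (fun j => by simp [stdL]),
    submatrix_Gmat m ℓ u _ _ (labL (m+1)) (stdL (m+1)) (lab_succAbove m)
      (fun j => by simp [stdL]),
    submatrix_Gmat m ℓ u _ _ (stdL (m+1)) (labL (m+1))
      (fun i => by simp [stdL]) (lab_succAbove m)] at hbig
  -- identify the interior with tauT m
  have hint : (Gmat (m+2) ℓ (stdL (m+2)) (stdL (m+2)) u).submatrix
      (Fin.castSucc ∘ Fin.castSucc) (Fin.castSucc ∘ Fin.castSucc)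
      = Matrix.of fun i j : Fin m => gFun (2 * (i:ℤ) - (j:ℤ) + 1 + ℓ) u := by
    ext i j
    show gFun (2 * stdL (m+2) (Fin.castSucc (Fin.castSucc i))
        - stdL (m+2) (Fin.castSucc (Fin.castSucc j)) + 1 + ℓ) u = _
    congr 1
  rw [hint] at hbig
  -- identify the outer determinants
  have hbig1 : tauT (m+1+1) ℓ u = (Gmat (m+2) ℓ (stdL (m+2)) (stdL (m+2)) u).det := rfl
  have hbig2 : tauT (m+1-1) ℓ u
      = (Matrix.of fun i j : Fin m => gFun (2 * (i:ℤ) - (j:ℤ) + 1 + ℓ) u).det := rfl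
  rw [hbig1, hbig2, ← hbig, hT', hT'', htauT, hPval,
    show (Gmat (m+1) ℓ (stdL (m+1)) (labL (m+1)) u).det = Qf u from rfl, hQval,
    show (Gmat (m+1) ℓ (stdL (m+1)) (stdL (m+1)) u).det = Tf u from rfl,
    show (Gmat (m+1) ℓ (labL (m+1)) (stdL (m+1)) u).det = Rf u from rfl]
  ring
end

section
/- For w₁,...,w_k nonzero, N a parameter, and G(α₁,...,α_k) = (∏ᵢ αᵢ) e^{N Σᵢ αᵢ} / ∏_{1≤i,j≤k}(w_j² − α_i²), the mixed derivative ∂^{3k}G/∂α₁³⋯∂α_k³ at α₁ = ⋯ = α_k = 0 equals 3^k · (∏_{j=1}^k w_j^{−2k}) · (N² + 2 Σ_{j=1}^k w_j^{−2})^k. -/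
/-- The third partial derivative operator in the `i`-th coordinate, for functions of
`k` complex variables. -/
noncomputable def thirdPartial {k : ℕ} (i : Fin k) (F : (Fin k → ℂ) → ℂ) :
    (Fin k → ℂ) → ℂ :=
  fun α => iteratedDeriv 3 (fun t => F (Function.update α i t)) (α i)

/-- The operator `∂^{3k}/∂α₁³ ⋯ ∂α_k³`: the composition of the third partial derivative
in each of the `k` variables. -/
noncomputable def allThirdPartials (k : ℕ) : ((Fin k → ℂ) → ℂ) → ((Fin k → ℂ) → ℂ) :=
  ((List.finRange k).map fun i => thirdPartial i).foldr (· ∘ ·) id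

/- ### Auxiliary lemmas -/

lemma my_iteratedDeriv_mul_const (n : ℕ) (f : ℂ → ℂ) (c : ℂ) :
    iteratedDeriv n (fun t => f t * c) = fun t => iteratedDeriv n f t * c := by
  induction n with
  | zero => simp [iteratedDeriv_zero]
  | succ n ih =>
    rw [iteratedDeriv_succ, iteratedDeriv_succ, ih]
    funext t
    exact deriv_mul_const_field c

lemma thirdPartial_prod {k : ℕ} (i : Fin k) (f : Fin k → ℂ → ℂ) :
    thirdPartial i (fun α => ∏ j, f j (α j))
      = fun α => ∏ j, Function.update f i (iteratedDeriv 3 (f i)) j (α j) := by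
  funext α
  unfold thirdPartial
  have h1 : (fun t => ∏ j, f j (Function.update α i t j))
      = fun t => f i t * ∏ j ∈ (Finset.univ \ {i}), f j (α j) := by
    funext t
    have hfe : (fun j => f j (Function.update α i t j))
        = Function.update (fun j => f j (α j)) i (f i t) := by
      funext j
      rcases eq_or_ne j i with h | h
      · subst h; simp
      · simp [Function.update_apply, h]
    calc ∏ j, f j (Function.update α i t j)
        = ∏ j, Function.update (fun j => f j (α j)) i (f i t) j :=
          Finset.prod_congr rfl fun j _ => congrFun hfe j
      _ = f i t * ∏ j ∈ (Finset.univ \ {i}), f j (α j) :=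
          Finset.prod_update_of_mem (Finset.mem_univ i) _ _
  rw [h1, my_iteratedDeriv_mul_const]
  have h2 : (fun j => Function.update f i (iteratedDeriv 3 (f i)) j (α j))
      = Function.update (fun j => f j (α j)) i (iteratedDeriv 3 (f i) (α i)) := by
    funext j
    rcases eq_or_ne j i with h | h
    · subst h; simp
    · simp [Function.update_apply, h]
  calc iteratedDeriv 3 (f i) (α i) * ∏ j ∈ (Finset.univ \ {i}), f j (α j)
      = ∏ j, Function.update (fun j => f j (α j)) i (iteratedDeriv 3 (f i) (α i)) j :=
        (Finset.prod_update_of_mem (Finset.mem_univ i) _ _).symm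
    _ = ∏ j, Function.update f i (iteratedDeriv 3 (f i)) j (α j) :=
        Finset.prod_congr rfl fun j _ => (congrFun h2 j).symm

/-- The result of applying third-partials along a list of indices, at the level of
coordinatewise products. -/
noncomputable def updAll {k : ℕ} (l : List (Fin k)) (f : Fin k → ℂ → ℂ) : Fin k → ℂ → ℂ :=
  l.foldr (fun i g => Function.update g i (iteratedDeriv 3 (g i))) f

lemma foldr_thirdPartial_prod {k : ℕ} (l : List (Fin k)) (f : Fin k → ℂ → ℂ) :
    ((l.map fun i => thirdPartial i).foldr (· ∘ ·) id) (fun α => ∏ j, f j (α j))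
      = fun α => ∏ j, updAll l f j (α j) := by
  induction l with
  | nil => rfl
  | cons i t ih =>
    simp only [List.map_cons, List.foldr_cons, Function.comp_apply]
    rw [ih, thirdPartial_prod]
    rfl

lemma updAll_nodup {k : ℕ} (l : List (Fin k)) (hl : l.Nodup) (f : Fin k → ℂ → ℂ) :
    updAll l f = fun j => if j ∈ l then iteratedDeriv 3 (f j) else f j := by
  induction l with
  | nil => simp [updAll]
  | cons i t ih =>
    obtain ⟨hi, ht⟩ := List.nodup_cons.mp hl
    show Function.update (updAll t f) i (iteratedDeriv 3 (updAll t f i)) = _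
    rw [ih ht]
    funext j
    rcases eq_or_ne j i with h | h
    · subst h; simp [hi]
    · simp [Function.update_apply, h, List.mem_cons]

lemma allThirdPartials_prod {k : ℕ} (f : Fin k → ℂ → ℂ) :
    allThirdPartials k (fun α => ∏ j, f j (α j))
      = fun α => ∏ j, iteratedDeriv 3 (f j) (α j) := by
  unfold allThirdPartials
  rw [foldr_thirdPartial_prod, updAll_nodup _ (List.nodup_finRange k)]
  simp [List.mem_finRange]

/- ### The one-variable computation -/

lemma hasDerivAt_prod_inv {k : ℕ} (w : Fin k → ℂ) (s : Finset (Fin k)) (t : ℂ)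
    (ht : ∀ j ∈ s, (w j) ^ 2 - t ^ 2 ≠ 0) :
    HasDerivAt (fun t : ℂ => ∏ j ∈ s, ((w j) ^ 2 - t ^ 2)⁻¹)
      ((∏ j ∈ s, ((w j) ^ 2 - t ^ 2)⁻¹) * ∑ j ∈ s, 2 * t / ((w j) ^ 2 - t ^ 2)) t := by
  classical
  induction s using Finset.induction_on with
  | empty => simpa using hasDerivAt_const t (1 : ℂ)
  | insert a s' hnot ih =>
    have ha : (w a) ^ 2 - t ^ 2 ≠ 0 := ht a (Finset.mem_insert_self a s')
    have hbase : HasDerivAt (fun t : ℂ => (w a) ^ 2 - t ^ 2) (0 - 2 * t ^ 1) t :=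
      (hasDerivAt_const t ((w a) ^ 2)).sub (by simpa using hasDerivAt_pow 2 t)
    have hinv : HasDerivAt (fun t : ℂ => ((w a) ^ 2 - t ^ 2)⁻¹)
        (-(0 - 2 * t ^ 1) / ((w a) ^ 2 - t ^ 2) ^ 2) t := hbase.inv ha
    have ih' := ih fun j hj => ht j (Finset.mem_insert_of_mem hj)
    have hmul := hinv.fun_mul ih'
    have hfun : (fun t : ℂ => ∏ j ∈ insert a s', ((w j) ^ 2 - t ^ 2)⁻¹)
        = fun y : ℂ => ((w a) ^ 2 - y ^ 2)⁻¹ * ∏ j ∈ s', ((w j) ^ 2 - y ^ 2)⁻¹ := by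
      funext y
      exact Finset.prod_insert hnot
    rw [hfun, Finset.prod_insert hnot, Finset.sum_insert hnot]
    refine hmul.congr_deriv (Eq.symm ?_)
    have h2 : ((w a) ^ 2 - t ^ 2)⁻¹ * (2 * t / ((w a) ^ 2 - t ^ 2))
        = -(0 - 2 * t ^ 1) / ((w a) ^ 2 - t ^ 2) ^ 2 := by
      rw [pow_two (((w a) ^ 2 - t ^ 2)), div_eq_mul_inv, div_eq_mul_inv, mul_inv]
      ring
    calc (((w a) ^ 2 - t ^ 2)⁻¹ * ∏ j ∈ s', ((w j) ^ 2 - t ^ 2)⁻¹)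
          * (2 * t / ((w a) ^ 2 - t ^ 2) + ∑ j ∈ s', 2 * t / ((w j) ^ 2 - t ^ 2))
        = (((w a) ^ 2 - t ^ 2)⁻¹ * (2 * t / ((w a) ^ 2 - t ^ 2)))
            * (∏ j ∈ s', ((w j) ^ 2 - t ^ 2)⁻¹)
          + ((w a) ^ 2 - t ^ 2)⁻¹
            * ((∏ j ∈ s', ((w j) ^ 2 - t ^ 2)⁻¹) * ∑ j ∈ s', 2 * t / ((w j) ^ 2 - t ^ 2)) := by
          ring
      _ = _ := by rw [h2]

lemma key_one_var (k : ℕ) (w : Fin k → ℂ) (hw : ∀ j, w j ≠ 0) (N : ℂ) :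
    iteratedDeriv 3 (fun t : ℂ => t * Complex.exp (N * t) / ∏ j, ((w j) ^ 2 - t ^ 2)) 0
      = 3 * (∏ j, ((w j) ^ 2)⁻¹) * (N ^ 2 + 2 * ∑ j, ((w j) ^ 2)⁻¹) := by
  set E : ℂ → ℂ := fun t => Complex.exp (N * t) * ∏ j, ((w j) ^ 2 - t ^ 2)⁻¹ with hE_def
  set L : ℂ → ℂ := fun t => N + ∑ j, 2 * t / ((w j) ^ 2 - t ^ 2) with hL_def
  set L1 : ℂ → ℂ := fun t => ∑ j, (2 * (w j) ^ 2 + 2 * t ^ 2) / ((w j) ^ 2 - t ^ 2) ^ 2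
    with hL1_def
  set U : Set ℂ := {t | ∀ j, (w j) ^ 2 - t ^ 2 ≠ 0} with hU_def
  set g : ℂ → ℂ := fun t => t * Complex.exp (N * t) / ∏ j, ((w j) ^ 2 - t ^ 2) with hg_def
  have hUopen : IsOpen U := by
    have : U = ⋂ j, {t : ℂ | (w j) ^ 2 - t ^ 2 ≠ 0} := by
      ext t; simp [hU_def]
    rw [this]
    refine isOpen_iInter_of_finite fun j => ?_
    have hcont : Continuous fun t : ℂ => (w j) ^ 2 - t ^ 2 := by continuity
    exact isOpen_compl_iff.mpr (isClosed_singleton.preimage hcont)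
  have h0U : (0 : ℂ) ∈ U := by
    intro j
    simpa using pow_ne_zero 2 (hw j)
  -- derivative of E
  have hE : ∀ t ∈ U, HasDerivAt E (E t * L t) t := by
    intro t ht
    have hexp : HasDerivAt (fun t : ℂ => Complex.exp (N * t)) (Complex.exp (N * t) * N) t := by
      have h1 : HasDerivAt (fun t : ℂ => N * t) N t := by
        simpa using (hasDerivAt_id t).const_mul N
      simpa using h1.cexp
    have hP := hasDerivAt_prod_inv w Finset.univ t (fun j _ => ht j)
    have hmul := hexp.mul hP
    have hval : E t * L t
        = Complex.exp (N * t) * N * (∏ j, ((w j) ^ 2 - t ^ 2)⁻¹)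
          + Complex.exp (N * t)
            * ((∏ j, ((w j) ^ 2 - t ^ 2)⁻¹) * ∑ j, 2 * t / ((w j) ^ 2 - t ^ 2)) := by
      rw [hE_def, hL_def]
      ring
    rw [hE_def]
    rw [hval]
    exact hmul
  -- derivative of L
  have hL : ∀ t ∈ U, HasDerivAt L (L1 t) t := by
    intro t ht
    have hsum : HasDerivAt (fun t : ℂ => ∑ j, 2 * t / ((w j) ^ 2 - t ^ 2))
        (∑ j, (2 * (w j) ^ 2 + 2 * t ^ 2) / ((w j) ^ 2 - t ^ 2) ^ 2) t := by
      apply HasDerivAt.fun_sum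
      intro j _
      have hnum : HasDerivAt (fun t : ℂ => 2 * t) 2 t := by
        simpa using (hasDerivAt_id t).const_mul (2 : ℂ)
      have hden : HasDerivAt (fun t : ℂ => (w j) ^ 2 - t ^ 2) (0 - 2 * t ^ 1) t :=
        (hasDerivAt_const t ((w j) ^ 2)).sub (by simpa using hasDerivAt_pow 2 t)
      have hdiv := hnum.div hden (ht j)
      have hval : (2 * (w j) ^ 2 + 2 * t ^ 2) / ((w j) ^ 2 - t ^ 2) ^ 2
          = (2 * ((w j) ^ 2 - t ^ 2) - 2 * t * (0 - 2 * t ^ 1)) / ((w j) ^ 2 - t ^ 2) ^ 2 := by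
        congr 1
        ring
      rw [hval]
      exact hdiv
    have := hsum.const_add N
    simpa [hL_def, hL1_def] using this
  -- differentiability of L1 at 0
  have hL1diff : DifferentiableAt ℂ L1 0 := by
    rw [hL1_def]
    apply DifferentiableAt.fun_sum
    intro j _
    apply DifferentiableAt.div
    · fun_prop
    · fun_prop
    · exact pow_ne_zero 2 (h0U j)
  -- g as a clean product
  have hgE : g = fun t => t * E t := by
    funext t
    simp only [hg_def, hE_def]
    rw [Finset.prod_inv_distrib]
    ring
  -- values at 0
  have hE0 : E 0 = ∏ j, ((w j) ^ 2)⁻¹ := by simp [hE_def]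
  have hL0v : L 0 = N := by simp [hL_def]
  have hL10v : L1 0 = 2 * ∑ j, ((w j) ^ 2)⁻¹ := by
    have hterm : ∀ j : Fin k, (2 * (w j) ^ 2 + 2 * (0 : ℂ) ^ 2) / ((w j) ^ 2 - 0 ^ 2) ^ 2
        = 2 * ((w j) ^ 2)⁻¹ := by
      intro j
      have hj : (w j) ^ 2 ≠ 0 := pow_ne_zero 2 (hw j)
      field_simp
      simp only [zero_pow two_ne_zero, add_zero, sub_zero]
      rw [div_eq_div_iff (pow_ne_zero 2 hj) hj]
      ring
    rw [hL1_def, Finset.mul_sum]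
    exact Finset.sum_congr rfl fun j _ => hterm j
  clear_value E L L1 U g
  clear hE_def hL_def hL1_def hU_def hg_def
  -- first derivative of g
  have hg : ∀ t ∈ U, HasDerivAt g (E t * (1 + t * L t)) t := by
    intro t ht
    rw [hgE]
    have h := (hasDerivAt_id' (x := t)).mul (hE t ht)
    have hval : E t * (1 + t * L t) = 1 * E t + t * (E t * L t) := by ring
    rw [hval]
    exact h
  set f₁ : ℂ → ℂ := fun t => E t * (1 + t * L t) with hf₁_def
  have hderiv1 : ∀ t ∈ U, deriv g t = f₁ t := fun t ht => (hg t ht).deriv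
  have hf₁ : ∀ t ∈ U,
      HasDerivAt f₁ (E t * (L t * (1 + t * L t) + (L t + t * L1 t))) t := by
    intro t ht
    have h1 : HasDerivAt (fun x : ℂ => 1 + x * L x) (0 + (1 * L t + t * L1 t)) t :=
      (hasDerivAt_const t (1 : ℂ)).add ((hasDerivAt_id' (x := t)).mul (hL t ht))
    have h := (hE t ht).mul h1
    have hval : E t * (L t * (1 + t * L t) + (L t + t * L1 t))
        = E t * L t * (1 + t * L t) + E t * (0 + (1 * L t + t * L1 t)) := by ring
    rw [hf₁_def, hval]
    exact h
  set f₂ : ℂ → ℂ := fun t => E t * (L t * (1 + t * L t) + (L t + t * L1 t)) with hf₂_def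
  have hderiv2 : ∀ t ∈ U, deriv (deriv g) t = f₂ t := by
    intro t ht
    have hev : deriv g =ᶠ[nhds t] f₁ :=
      Filter.eventuallyEq_of_mem (hUopen.mem_nhds ht) hderiv1
    rw [hev.deriv_eq]
    exact (hf₁ t ht).deriv
  -- derivative of f₂ at 0
  have hL0 := hL 0 h0U
  have hL10 := hL1diff.hasDerivAt
  have hM : HasDerivAt (fun t => L t * (1 + t * L t) + (L t + t * L1 t))
      (L1 0 * (1 + 0 * L 0) + L 0 * (0 + (1 * L 0 + 0 * L1 0))
        + (L1 0 + (1 * L1 0 + 0 * deriv L1 0))) 0 := by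
    have h1 : HasDerivAt (fun x : ℂ => 1 + x * L x) (0 + (1 * L 0 + 0 * L1 0)) 0 :=
      (hasDerivAt_const 0 (1 : ℂ)).add ((hasDerivAt_id' (x := 0)).mul hL0)
    have h2 := hL0.mul h1
    have h3 : HasDerivAt (fun x : ℂ => x * L1 x) (1 * L1 0 + 0 * deriv L1 0) 0 :=
      (hasDerivAt_id' (x := 0)).mul hL10
    exact h2.add (hL0.add h3)
  have hf₂0 : HasDerivAt f₂
      (E 0 * L 0 * (L 0 * (1 + 0 * L 0) + (L 0 + 0 * L1 0))
        + E 0 * (L1 0 * (1 + 0 * L 0) + L 0 * (0 + (1 * L 0 + 0 * L1 0))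
          + (L1 0 + (1 * L1 0 + 0 * deriv L1 0)))) 0 := by
    rw [hf₂_def]
    exact (hE 0 h0U).mul hM
  -- put everything together
  have h3 : iteratedDeriv 3 g 0 = deriv (deriv (deriv g)) 0 := by
    simp [iteratedDeriv_succ, iteratedDeriv_zero]
  rw [h3]
  have hev1 : deriv g =ᶠ[nhds 0] f₁ :=
    Filter.eventuallyEq_of_mem (hUopen.mem_nhds h0U) hderiv1
  have hev2 : deriv (deriv g) =ᶠ[nhds 0] f₂ :=
    Filter.eventuallyEq_of_mem (hUopen.mem_nhds h0U) hderiv2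
  rw [hev2.deriv_eq, hf₂0.deriv, hE0, hL0v, hL10v]
  ring

/- ### Main theorem -/

/-- For `w₁, …, w_k` nonzero and
`G(α) = (∏ᵢ αᵢ) e^{N Σᵢ αᵢ} / ∏_{i,j} (w_j² − α_i²)`, the mixed derivative
`∂^{3k}G/∂α₁³⋯∂α_k³` at `α = 0` equals
`3^k (∏_j w_j^{−2k}) (N² + 2 Σ_j w_j^{−2})^k`. -/
theorem mixed_third_derivative (k : ℕ) (w : Fin k → ℂ) (hw : ∀ j, w j ≠ 0) (N : ℂ) :
    allThirdPartials k
        (fun α => (∏ i, α i) * Complex.exp (N * ∑ i, α i)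
          / ∏ i, ∏ j, ((w j) ^ 2 - (α i) ^ 2))
        (fun _ => 0)
      = 3 ^ k * (∏ j, (w j) ^ (-(2 * (k : ℤ))))
          * (N ^ 2 + 2 * ∑ j, (w j) ^ (-2 : ℤ)) ^ k := by
  set g : ℂ → ℂ := fun t => t * Complex.exp (N * t) / ∏ j, ((w j) ^ 2 - t ^ 2) with hg_def
  have hG : (fun α : Fin k → ℂ => (∏ i, α i) * Complex.exp (N * ∑ i, α i)
      / ∏ i, ∏ j, ((w j) ^ 2 - (α i) ^ 2)) = fun α => ∏ i, g (α i) := by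
    funext α
    simp only [hg_def]
    rw [Finset.prod_div_distrib, Finset.prod_mul_distrib, ← Complex.exp_sum]
    congr 2
    rw [Finset.mul_sum]
  rw [hG]
  rw [show (fun α : Fin k → ℂ => ∏ i, g (α i))
      = fun α : Fin k → ℂ => ∏ i, (fun _ : Fin k => g) i (α i) from rfl]
  rw [allThirdPartials_prod]
  simp only
  rw [Finset.prod_const, Finset.card_univ, Fintype.card_fin, key_one_var k w hw N]
  have hzpowk : ∀ j : Fin k, (w j) ^ (-(2 * (k : ℤ))) = (((w j) ^ 2)⁻¹) ^ k := by
    intro j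
    rw [zpow_neg, show (2 * (k : ℤ)) = ((2 * k : ℕ) : ℤ) by push_cast; ring,
      zpow_natCast, pow_mul, ← inv_pow]
  have hzpow2 : ∀ j : Fin k, (w j) ^ (-2 : ℤ) = ((w j) ^ 2)⁻¹ := by
    intro j
    rw [zpow_neg]
    norm_cast
  have hpk : (∏ j, ((w j) ^ 2)⁻¹) ^ k = ∏ j, (w j) ^ (-(2 * (k : ℤ))) := by
    rw [← Finset.prod_pow]
    exact Finset.prod_congr rfl fun j _ => (hzpowk j).symm
  simp only [hzpow2]
  rw [mul_pow, mul_pow, hpk]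
end

section
/- Single-variable version of Lemma 4 (m = 2 case, one variable): for w₁,...,w_k nonzero and N ∈ ℂ, the second derivative of α ↦ e^{−Nα}/∏_{j=1}^k(w_j² − α²) evaluated at α = 0 equals (∏_j w_j^{−2})·(N² + 2Σ_j w_j^{−2}). -/
open Finset Filter Topology

/-- For `w₁, …, w_k` nonzero and `N ∈ ℂ`, the second derivative of
`α ↦ e^{−Nα} / ∏_j (w_j² − α²)` at `α = 0` equals
`(∏_j w_j^{−2}) (N² + 2 Σ_j w_j^{−2})`. -/
theorem second_deriv_single_variable (k : ℕ) (w : Fin k → ℂ) (hw : ∀ j, w j ≠ 0) (N : ℂ) :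
    iteratedDeriv 2 (fun α : ℂ => Complex.exp (-N * α) / ∏ j, ((w j) ^ 2 - α ^ 2)) 0
      = (∏ j, (w j) ^ (-2 : ℤ)) * (N ^ 2 + 2 * ∑ j, (w j) ^ (-2 : ℤ)) := by
  classical
  set P : ℂ → ℂ := fun α => ∏ j, ((w j) ^ 2 - α ^ 2) with hP
  set Q : ℂ → ℂ := fun α => ∑ j, (∏ i ∈ Finset.univ.erase j, ((w i) ^ 2 - α ^ 2)) * (-(2 * α))
    with hQ
  -- factor derivative : each factor w j ^2 - α^2 has derivative -(2α)
  have hfac : ∀ (j : Fin k) (α : ℂ),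
      HasDerivAt (fun α : ℂ => (w j) ^ 2 - α ^ 2) (-(2 * α)) α := by
    intro j α
    simpa using ((hasDerivAt_pow 2 α).const_sub ((w j) ^ 2))
  have hPd : ∀ α : ℂ, HasDerivAt P (Q α) α := by
    intro α
    have := HasDerivAt.fun_finsetProd (u := Finset.univ)
      (f := fun j (α : ℂ) => (w j) ^ 2 - α ^ 2) (f' := fun _ => -(2 * α))
      (fun i _ => hfac i α)
    simpa [P, Q, smul_eq_mul] using this
  have hP0 : P 0 = ∏ j, (w j) ^ 2 := by simp [P]
  have hP0ne : P 0 ≠ 0 := by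
    rw [hP0]; exact Finset.prod_ne_zero_iff.2 fun j _ => pow_ne_zero 2 (hw j)
  -- the set where P ≠ 0 is an open neighborhood of 0
  have hPc : Continuous P := by
    apply continuous_finset_prod
    intro i _
    exact continuous_const.sub (continuous_pow 2)
  have hopen : IsOpen {α : ℂ | P α ≠ 0} := isOpen_compl_iff.2 (isClosed_eq hPc continuous_const)
  have hmem : {α : ℂ | P α ≠ 0} ∈ 𝓝 (0 : ℂ) := hopen.mem_nhds hP0ne
  set g : ℂ → ℂ := fun α =>
    ((-N * Complex.exp (-N * α)) * P α - Complex.exp (-N * α) * Q α) / (P α) ^ 2 with hg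
  have hderiv : ∀ α : ℂ, P α ≠ 0 →
      HasDerivAt (fun α : ℂ => Complex.exp (-N * α) / P α) (g α) α := by
    intro α hα
    have he : HasDerivAt (fun α : ℂ => Complex.exp (-N * α)) (-N * Complex.exp (-N * α)) α := by
      simpa [mul_comm] using ((hasDerivAt_id α).const_mul (-N)).cexp
    exact he.div (hPd α) hα
  have heq : deriv (fun α : ℂ => Complex.exp (-N * α) / P α) =ᶠ[𝓝 (0 : ℂ)] g :=
    eventually_of_mem hmem fun α hα => (hderiv α hα).deriv
  -- now compute deriv g 0
  have hQ0 : Q 0 = 0 := by simp [Q]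
  -- each partial product has derivative 0 at 0
  have hRd : ∀ j : Fin k, HasDerivAt
      (fun α : ℂ => ∏ i ∈ Finset.univ.erase j, ((w i) ^ 2 - α ^ 2)) 0 0 := by
    intro j
    have := HasDerivAt.fun_finsetProd (u := Finset.univ.erase j)
      (f := fun i (α : ℂ) => (w i) ^ 2 - α ^ 2) (f' := fun _ => -(2 * (0:ℂ)))
      (fun i _ => hfac i 0)
    simpa using this
  have hQd : HasDerivAt Q (∑ j, (∏ i ∈ Finset.univ.erase j, (w i) ^ 2) * (-2)) 0 := by
    have : ∀ j : Fin k, HasDerivAt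
        (fun α : ℂ => (∏ i ∈ Finset.univ.erase j, ((w i) ^ 2 - α ^ 2)) * (-(2 * α)))
        ((∏ i ∈ Finset.univ.erase j, (w i) ^ 2) * (-2)) 0 := by
      intro j
      have hm : HasDerivAt (fun α : ℂ => -(2 * α)) (-2) 0 := by
        simpa using ((hasDerivAt_id (0:ℂ)).const_mul (2:ℂ)).fun_neg
      have := (hRd j).fun_mul hm
      simpa using this
    have := HasDerivAt.fun_sum (u := Finset.univ) (fun j _ => this j)
    simpa [Q] using this
  have hQ'0 : (∑ j, (∏ i ∈ Finset.univ.erase j, (w i) ^ 2) * (-2))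
      = -2 * (P 0 * ∑ j, ((w j) ^ 2)⁻¹) := by
    have h1 : ∀ j : Fin k, (∏ i ∈ Finset.univ.erase j, (w i) ^ 2)
        = (∏ j, (w j) ^ 2) * (((w j) ^ 2)⁻¹) := by
      intro j
      rw [← Finset.prod_erase_mul Finset.univ _ (Finset.mem_univ j)]
      field_simp [pow_ne_zero 2 (hw j)]
      exact (mul_div_cancel_right₀ _ (hw j)).symm
    rw [hP0]
    simp only [h1]
    rw [← Finset.sum_mul, ← Finset.mul_sum]
    ring
  -- derivative of g at 0
  have he0 : HasDerivAt (fun α : ℂ => Complex.exp (-N * α)) (-N * Complex.exp (-N * 0)) 0 := by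
    simpa [mul_comm] using ((hasDerivAt_id (0:ℂ)).const_mul (-N)).cexp
  have hnum : HasDerivAt
      (fun α => (-N * Complex.exp (-N * α)) * P α - Complex.exp (-N * α) * Q α)
      (((-N) * (-N * Complex.exp (-N * 0))) * P 0 + (-N * Complex.exp (-N * 0)) * Q 0
        - ((-N * Complex.exp (-N * 0)) * Q 0
          + Complex.exp (-N * 0) * (∑ j, (∏ i ∈ Finset.univ.erase j, (w i) ^ 2) * (-2)))) 0 := by
    exact ((he0.const_mul (-N)).mul (hPd 0)).sub (he0.mul hQd)
  have hden : HasDerivAt (fun α => (P α) ^ 2) (2 * P 0 ^ 1 * Q 0) 0 := (hPd 0).pow 2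
  have hgd := hnum.fun_div hden (pow_ne_zero 2 hP0ne)
  have hg0 : deriv g 0 =
      (Complex.exp (-N * 0) * (N ^ 2 * P 0 + 2 * (P 0 * ∑ j, ((w j) ^ 2)⁻¹)) * (P 0 ^ 2))
        / (P 0 ^ 2) ^ 2 := by
    rw [hgd.deriv]
    rw [hQ'0, hQ0]
    ring
  -- put everything together
  have : iteratedDeriv 2 (fun α : ℂ => Complex.exp (-N * α) / P α) 0 = deriv g 0 := by
    rw [iteratedDeriv_succ, iteratedDeriv_one]
    exact heq.deriv_eq
  rw [show (fun α : ℂ => Complex.exp (-N * α) / ∏ j, ((w j) ^ 2 - α ^ 2))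
      = fun α : ℂ => Complex.exp (-N * α) / P α from rfl, this, hg0]
  have hP0ne' : (∏ j, (w j) ^ 2 : ℂ) ≠ 0 :=
    Finset.prod_ne_zero_iff.2 fun j _ => pow_ne_zero 2 (hw j)
  have hz : ∀ j : Fin k, (w j : ℂ) ^ (-2 : ℤ) = ((w j) ^ 2)⁻¹ := by
    intro j
    rw [zpow_neg, zpow_ofNat]
  have hpi : (∏ j, ((w j) ^ 2)⁻¹ : ℂ) = (∏ j, (w j) ^ 2)⁻¹ := by
    rw [Finset.prod_inv_distrib]
  simp only [hz, hP0, hpi]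
  field_simp
  rw [mul_zero, neg_zero, Complex.exp_zero]
  ring
end

section
/- Value of the second symplectic constant: with T_{2,0}(u) = g₁(u)g₂(u) − g₀(u)g₃(u) where g_m(u) = Σ_{j≥0} u^j/(j!(m+2j)!), the constant b₂ := 2^{−7} · (d/du)² [ e^u T_{2,0}(2u) ]|_{u=0} equals 19/(2⁴·3²·5·7) = 19/5040. -/
open scoped Nat

/-- `T_{2,0}(u) = det [[g₁(u), g₀(u)], [g₃(u), g₂(u)]] = g₁(u)g₂(u) − g₀(u)g₃(u)`. -/
noncomputable def tauTwoZero (u : ℂ) : ℂ :=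
  Matrix.det (!![gFun 1 u, gFun 0 u; gFun 3 u, gFun 2 u])




noncomputable def g (m : ℕ) (u : ℂ) : ℂ :=
  ∑' j : ℕ, u ^ j / ((j ! : ℂ) * ((m + 2 * j)! : ℂ))

lemma gFun_natCast (m : ℕ) (u : ℂ) : gFun (m : ℤ) u = g m u := by
  unfold gFun g
  refine tsum_congr fun j => ?_
  rw [if_pos (by positivity)]
  have h : ((m : ℤ) + 2 * (j : ℤ)).toNat = m + 2 * j := by omega
  rw [h]

lemma summable_g (m : ℕ) (x : ℂ) :
    Summable fun j : ℕ => x ^ j / ((j ! : ℂ) * ((m + 2 * j)! : ℂ)) := by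
  apply Summable.of_norm
  refine Summable.of_nonneg_of_le (fun j => norm_nonneg _) (fun j => ?_)
    (Real.summable_pow_div_factorial ‖x‖)
  rw [norm_div, norm_pow, norm_mul, Complex.norm_natCast, Complex.norm_natCast]
  have h2 : (j ! : ℝ) ≤ (j ! : ℝ) * ((m + 2 * j)! : ℝ) := by
    nlinarith [(by exact_mod_cast Nat.factorial_pos (m+2*j) : (1:ℝ) ≤ ((m+2*j)! : ℝ)),
      (by exact_mod_cast Nat.factorial_pos j : (0:ℝ) < (j ! : ℝ))]
  gcongr


lemma hasDerivAt_g (m : ℕ) (u : ℂ) : HasDerivAt (g m) (g (m + 2) u) u := by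
  set r : ℝ := ‖u‖ + 1 with hrdef
  have hr1 : (1:ℝ) ≤ r := by simp [hrdef, norm_nonneg]
  have hu : Summable (fun j : ℕ => (2*r)^j / j !) := Real.summable_pow_div_factorial _
  have humem : u ∈ Metric.ball (0:ℂ) r := by
    simpa [mem_ball_zero_iff, hrdef] using lt_add_one ‖u‖
  have hbound : ∀ (n : ℕ), ∀ y ∈ Metric.ball (0:ℂ) r,
      ‖(n : ℂ) * y ^ (n-1) / ((n ! : ℂ) * ((m + 2*n)! : ℂ))‖ ≤ (2*r)^n / n ! := by
    intro n y hy
    have hy' : ‖y‖ ≤ r := (mem_ball_zero_iff.mp hy).le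
    have h1 : ‖y‖^(n-1) ≤ r^n := by
      calc ‖y‖^(n-1) ≤ r^(n-1) := pow_le_pow_left₀ (norm_nonneg y) hy' _
        _ ≤ r^n := pow_le_pow_right₀ hr1 (Nat.sub_le n 1)
    have h2 : (n:ℝ) ≤ 2^n := by exact_mod_cast (Nat.lt_two_pow_self (n := n)).le
    have h3 : (1:ℝ) ≤ ((m+2*n)! : ℝ) := by exact_mod_cast Nat.factorial_pos _
    have h4 : (0:ℝ) < (n ! : ℝ) := by exact_mod_cast Nat.factorial_pos n
    rw [norm_div, norm_mul, norm_pow, norm_mul, Complex.norm_natCast,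
      Complex.norm_natCast, Complex.norm_natCast]
    have key : (n:ℝ) * ‖y‖^(n-1) / ((n ! : ℝ) * ((m+2*n)! : ℝ))
        ≤ ((2:ℝ)^n * r^n) / (n ! : ℝ) :=
      div_le_div₀ (by positivity) (mul_le_mul h2 h1 (by positivity) (by positivity)) h4
        (by nlinarith)
    simpa [mul_pow] using key
  have hderiv : ∀ (n : ℕ), ∀ y ∈ Metric.ball (0:ℂ) r,
      HasDerivAt (fun x : ℂ => x ^ n / ((n ! : ℂ) * ((m + 2*n)! : ℂ)))
        ((n : ℂ) * y ^ (n-1) / ((n ! : ℂ) * ((m + 2*n)! : ℂ))) y := by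
    intro n y _
    exact (hasDerivAt_pow n y).div_const _
  have main := hasDerivAt_tsum_of_isPreconnected hu Metric.isOpen_ball
    ((convex_ball (0:ℂ) r).isPreconnected) hderiv hbound humem (summable_g m u) humem
  have hsum' : Summable (fun n : ℕ => (n : ℂ) * u ^ (n-1) / ((n ! : ℂ) * ((m + 2*n)! : ℂ))) :=
    Summable.of_norm (hu.of_nonneg_of_le (fun n => norm_nonneg _) (fun n => hbound n u humem))
  have heq : (∑' n : ℕ, (n : ℂ) * u ^ (n-1) / ((n ! : ℂ) * ((m + 2*n)! : ℂ))) = g (m+2) u := by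
    rw [hsum'.tsum_eq_zero_add]
    simp only [Nat.cast_zero, zero_mul, zero_div, zero_add]
    unfold g
    refine tsum_congr fun n => ?_
    have e1 : m + 2 * (n+1) = (m+2) + 2*n := by ring
    simp only [Nat.add_sub_cancel, e1, Nat.factorial_succ]
    have hn1 : ((n:ℂ) + 1) ≠ 0 := by
      exact Nat.cast_add_one_ne_zero n
    have hnf : ((n ! : ℂ)) ≠ 0 := by exact_mod_cast Nat.factorial_ne_zero n
    have hmf : (((m+2+2*n)! : ℂ)) ≠ 0 := by exact_mod_cast Nat.factorial_ne_zero _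
    push_cast
    field_simp
  rw [heq] at main
  exact main

lemma g_zero (m : ℕ) : g m 0 = 1 / (m ! : ℂ) := by
  unfold g
  rw [tsum_eq_single 0 (fun j hj => by simp [zero_pow hj])]
  simp


lemma key (m : ℕ) (u : ℂ) :
    HasDerivAt (fun u : ℂ => g m (2 * u)) (2 * g (m + 2) (2 * u)) u := by
  have h := (hasDerivAt_g m (2 * u)).comp u ((hasDerivAt_id u).const_mul 2)
  have h2 : (2:ℂ) * g (m+2) (2*u) = g (m+2) (2*u) * (2 * 1) := by ring
  rw [h2]
  exact h

/-- The second symplectic constant: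
`b₂ = 2^{−7} · (d/du)² [e^u T_{2,0}(2u)]|_{u=0} = 19/5040`. -/
theorem b_two_USp :
    ((2 : ℂ) ^ 7)⁻¹ * iteratedDeriv 2 (fun u : ℂ => Complex.exp u * tauTwoZero (2 * u)) 0
      = 19 / 5040 := by
  have hfeq : (fun u : ℂ => Complex.exp u * tauTwoZero (2 * u))
      = fun u : ℂ => Complex.exp u * (g 1 (2*u) * g 2 (2*u) - g 0 (2*u) * g 3 (2*u)) := by
    funext u
    have e0 : gFun 0 (2*u) = g 0 (2*u) := by simpa using gFun_natCast 0 (2*u)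
    have e1 : gFun 1 (2*u) = g 1 (2*u) := by simpa using gFun_natCast 1 (2*u)
    have e2 : gFun 2 (2*u) = g 2 (2*u) := by simpa using gFun_natCast 2 (2*u)
    have e3 : gFun 3 (2*u) = g 3 (2*u) := by simpa using gFun_natCast 3 (2*u)
    simp [tauTwoZero, Matrix.det_fin_two_of, e0, e1, e2, e3]
  rw [hfeq]
  have hA : ∀ u : ℂ, HasDerivAt (fun u : ℂ => g 1 (2*u) * g 2 (2*u) - g 0 (2*u) * g 3 (2*u))
      (2 * g 3 (2*u) * g 2 (2*u) + g 1 (2*u) * (2 * g 4 (2*u))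
        - (2 * g 2 (2*u) * g 3 (2*u) + g 0 (2*u) * (2 * g 5 (2*u)))) u := by
    intro u
    exact ((key 1 u).mul (key 2 u)).sub ((key 0 u).mul (key 3 u))
  have H1 : ∀ u : ℂ, HasDerivAt
      (fun u : ℂ => Complex.exp u * (g 1 (2*u) * g 2 (2*u) - g 0 (2*u) * g 3 (2*u)))
      (Complex.exp u * (g 1 (2*u) * g 2 (2*u) - g 0 (2*u) * g 3 (2*u))
        + Complex.exp u * (2 * g 3 (2*u) * g 2 (2*u) + g 1 (2*u) * (2 * g 4 (2*u))
          - (2 * g 2 (2*u) * g 3 (2*u) + g 0 (2*u) * (2 * g 5 (2*u))))) u :=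
    fun u => (Complex.hasDerivAt_exp u).mul (hA u)
  have hA' : HasDerivAt (fun u : ℂ => 2 * g 3 (2*u) * g 2 (2*u) + g 1 (2*u) * (2 * g 4 (2*u))
      - (2 * g 2 (2*u) * g 3 (2*u) + g 0 (2*u) * (2 * g 5 (2*u))))
      (2 * (2 * g 5 0) * g 2 0 + 2 * g 3 0 * (2 * g 4 0)
        + (2 * g 3 0 * (2 * g 4 0) + g 1 0 * (2 * (2 * g 6 0)))
        - (2 * (2 * g 4 0) * g 3 0 + 2 * g 2 0 * (2 * g 5 0)
          + (2 * g 2 0 * (2 * g 5 0) + g 0 0 * (2 * (2 * g 7 0))))) 0 := by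
    have h := ((((key 3 0).const_mul 2).mul (key 2 0)).add
        ((key 1 0).mul ((key 4 0).const_mul 2))).sub
      ((((key 2 0).const_mul 2).mul (key 3 0)).add ((key 0 0).mul ((key 5 0).const_mul 2)))
    exact h.congr_deriv (by simp)
  have H2 : HasDerivAt
      (fun u : ℂ => Complex.exp u * (g 1 (2*u) * g 2 (2*u) - g 0 (2*u) * g 3 (2*u))
        + Complex.exp u * (2 * g 3 (2*u) * g 2 (2*u) + g 1 (2*u) * (2 * g 4 (2*u))
          - (2 * g 2 (2*u) * g 3 (2*u) + g 0 (2*u) * (2 * g 5 (2*u)))))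
      (Complex.exp 0 * (g 1 0 * g 2 0 - g 0 0 * g 3 0)
        + Complex.exp 0 * (2 * g 3 0 * g 2 0 + g 1 0 * (2 * g 4 0)
          - (2 * g 2 0 * g 3 0 + g 0 0 * (2 * g 5 0)))
        + (Complex.exp 0 * (2 * g 3 0 * g 2 0 + g 1 0 * (2 * g 4 0)
            - (2 * g 2 0 * g 3 0 + g 0 0 * (2 * g 5 0)))
          + Complex.exp 0 * (2 * (2 * g 5 0) * g 2 0 + 2 * g 3 0 * (2 * g 4 0)
            + (2 * g 3 0 * (2 * g 4 0) + g 1 0 * (2 * (2 * g 6 0)))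
            - (2 * (2 * g 4 0) * g 3 0 + 2 * g 2 0 * (2 * g 5 0)
              + (2 * g 2 0 * (2 * g 5 0) + g 0 0 * (2 * (2 * g 7 0))))))) 0 := by
    have h := ((Complex.hasDerivAt_exp 0).mul (hA 0)).add ((Complex.hasDerivAt_exp 0).mul hA')
    exact h.congr_deriv (by simp)
  rw [show (2 : ℕ) = 1 + 1 from rfl, iteratedDeriv_succ, iteratedDeriv_succ, iteratedDeriv_zero]
  rw [funext fun u => (H1 u).deriv]
  rw [H2.deriv]
  simp only [g_zero, Complex.exp_zero]
  norm_num [Nat.factorial]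
end
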